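/- arXiv:1108.3392 — 5 statements merged into one kernel-verified Lean document; each statement's English description precedes it below -/
import Mathlib

section
/- Let φ ∈ L∞(ℝ, X) with Pφ ∈ L∞(ℝ, X), where Pφ(t) = ∫₀^t φ(s) ds. Then sp(φ) ⊆ sp(Pφ) ⊆ sp(φ) ∪ {0}, where sp denotes the Beurling spectrum. -/
open MeasureTheory Filter Topology

noncomputable section

variable {X : Type*} [NormedAddCommGroup X] [NormedSpace ℂ X] [CompleteSpace X]

def scConv (f : ℝ → ℂ) (φ : ℝ → X) (t : ℝ) : X := ∫ s, f s • φ (t - s)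

def FT (f : ℝ → ℂ) (ω : ℝ) : ℂ := ∫ t : ℝ, f t * Complex.exp (-(Complex.I * ω * t))

def EssBdd (φ : ℝ → X) : Prop :=
  AEStronglyMeasurable φ (volume : Measure ℝ) ∧ ∃ C : ℝ, ∀ᵐ t : ℝ, ‖φ t‖ ≤ C

/-- The Beurling spectrum. -/
def BSpec (φ : ℝ → X) : Set ℝ :=
  {ω | ∀ f : ℝ → ℂ, Integrable f → (∀ᵐ t : ℝ, scConv f φ t = 0) → FT f ω = 0}

/-- The indefinite integral `(Pφ)(t) = ∫₀^t φ(s) ds`. -/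
def P (φ : ℝ → X) (t : ℝ) : X := ∫ s in (0:ℝ)..t, φ s

namespace SpecAux

lemma mp_sub_left (t : ℝ) : MeasurePreserving (fun s : ℝ => t - s) volume volume := by
  simp_rw [sub_eq_add_neg]
  exact (measurePreserving_add_left volume t).comp (Measure.measurePreserving_neg volume)

lemma integrand_integrable {f : ℝ → ℂ} {ψ : ℝ → X} (hf : Integrable f) (hψ : EssBdd ψ)
    (t : ℝ) : Integrable (fun s => f s • ψ (t - s)) := by
  obtain ⟨hm, C, hC⟩ := hψ
  have hmc : AEStronglyMeasurable (fun s => ψ (t - s)) (volume : Measure ℝ) :=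
    hm.comp_quasiMeasurePreserving (mp_sub_left t).quasiMeasurePreserving
  refine (hf.norm.mul_const C).mono' (hf.aestronglyMeasurable.smul hmc) ?_
  filter_upwards [(mp_sub_left t).quasiMeasurePreserving.ae hC] with s hs
  rw [norm_smul]
  exact mul_le_mul_of_nonneg_left hs (norm_nonneg _)

lemma integrand_aesm_prod {f : ℝ → ℂ} {ψ : ℝ → X} (hf : Integrable f) (hψ : EssBdd ψ) :
    AEStronglyMeasurable (fun p : ℝ × ℝ => f p.2 • ψ (p.1 - p.2))
      ((volume : Measure ℝ).prod volume) := by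
  have h1 : AEStronglyMeasurable (fun p : ℝ × ℝ => f p.2) ((volume : Measure ℝ).prod volume) :=
    hf.aestronglyMeasurable.comp_snd
  have h2 : AEStronglyMeasurable (fun p : ℝ × ℝ => ψ (p.1 - p.2))
      ((volume : Measure ℝ).prod volume) :=
    (hψ.1.comp_fst (ν := volume)).comp_quasiMeasurePreserving
      (measurePreserving_sub_prod volume volume).quasiMeasurePreserving
  exact h1.smul h2

lemma integrand_bound_prod {f : ℝ → ℂ} {ψ : ℝ → X} {C : ℝ} (hC : ∀ᵐ t : ℝ, ‖ψ t‖ ≤ C) :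
    ∀ᵐ p : ℝ × ℝ ∂((volume : Measure ℝ).prod volume), ‖f p.2 • ψ (p.1 - p.2)‖ ≤ ‖f p.2‖ * C := by
  have h1 : ∀ᵐ p : ℝ × ℝ ∂((volume : Measure ℝ).prod volume), ‖ψ (p.1 - p.2)‖ ≤ C :=
    (measurePreserving_sub_prod volume volume).quasiMeasurePreserving.ae
      (Measure.quasiMeasurePreserving_fst.ae hC)
  filter_upwards [h1] with p hp
  rw [norm_smul]
  exact mul_le_mul_of_nonneg_left hp (norm_nonneg _)

lemma scConv_aesm {f : ℝ → ℂ} {ψ : ℝ → X} (hf : Integrable f) (hψ : EssBdd ψ) :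
    AEStronglyMeasurable (scConv f ψ) (volume : Measure ℝ) := by
  have := (integrand_aesm_prod hf hψ).integral_prod_right'
  exact this

lemma scConv_bound {f : ℝ → ℂ} {ψ : ℝ → X} {C : ℝ} (hf : Integrable f) (hψ : EssBdd ψ)
    (hC : ∀ᵐ t : ℝ, ‖ψ t‖ ≤ C) (t : ℝ) : ‖scConv f ψ t‖ ≤ ∫ s, ‖f s‖ * C := by
  refine norm_integral_le_of_norm_le (hf.norm.mul_const C) ?_
  filter_upwards [(mp_sub_left t).quasiMeasurePreserving.ae hC] with s hs
  rw [norm_smul]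
  exact mul_le_mul_of_nonneg_left hs (norm_nonneg _)

lemma essBdd_intervalIntegrable {ψ : ℝ → X} (hm : AEStronglyMeasurable ψ (volume : Measure ℝ))
    {C : ℝ} (hC : ∀ᵐ t : ℝ, ‖ψ t‖ ≤ C) (a b : ℝ) : IntervalIntegrable ψ volume a b := by
  rw [intervalIntegrable_iff]
  refine Measure.integrableOn_of_bounded ?_ hm (ae_restrict_of_ae hC)
  rw [Set.uIoc]
  exact measure_Ioc_lt_top.ne

lemma essBdd_locallyIntegrable {ψ : ℝ → X} (hm : AEStronglyMeasurable ψ (volume : Measure ℝ))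
    {C : ℝ} (hC : ∀ᵐ t : ℝ, ‖ψ t‖ ≤ C) : LocallyIntegrable ψ (volume : Measure ℝ) := by
  intro x
  refine ⟨Metric.ball x 1, Metric.ball_mem_nhds x one_pos, ?_⟩
  exact Measure.integrableOn_of_bounded measure_ball_lt_top.ne hm (ae_restrict_of_ae hC)

lemma key_le {f : ℝ → ℂ} {φ : ℝ → X} (hf : Integrable f) (hφ : EssBdd φ) (hPφ : EssBdd (P φ))
    {a b : ℝ} (hab : a ≤ b) :
    (∫ u in a..b, scConv f φ u) = scConv f (P φ) b - scConv f (P φ) a := by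
  obtain ⟨hm, C, hC⟩ := hφ
  set I : Set ℝ := Set.Ioc a b with hI
  have hprodeq : ((volume : Measure ℝ).restrict I).prod (volume : Measure ℝ)
      = ((volume : Measure ℝ).prod volume).restrict (I ×ˢ Set.univ) := by
    rw [← Measure.prod_restrict, Measure.restrict_univ]
  have hk_aesm : AEStronglyMeasurable (fun p : ℝ × ℝ => f p.2 • φ (p.1 - p.2))
      (((volume : Measure ℝ).restrict I).prod volume) := by
    rw [hprodeq]
    exact (integrand_aesm_prod hf ⟨hm, C, hC⟩).restrict
  have hk_int : Integrable (fun p : ℝ × ℝ => f p.2 • φ (p.1 - p.2))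
      (((volume : Measure ℝ).restrict I).prod volume) := by
    have hB : Integrable (fun p : ℝ × ℝ => ‖f p.2‖ * C)
        (((volume : Measure ℝ).restrict I).prod volume) := by
      have h := (integrable_const (μ := (volume : Measure ℝ).restrict I) (1 : ℝ)).mul_prod
        (hf.norm.mul_const C)
      simpa using h
    refine hB.mono' hk_aesm ?_
    rw [hprodeq]
    exact ae_restrict_of_ae (integrand_bound_prod hC)
  have swap := integral_integral_swap (μ := (volume : Measure ℝ).restrict I)
    (ν := (volume : Measure ℝ)) (f := fun u s => f s • φ (u - s)) hk_int
  have hPint : ∀ c : ℝ, IntervalIntegrable φ volume 0 c :=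
    fun c => essBdd_intervalIntegrable hm hC 0 c
  have inner : ∀ s : ℝ, (∫ u in I, f s • φ (u - s)) = f s • (P φ (b - s) - P φ (a - s)) := by
    intro s
    have h1 : (∫ u in I, f s • φ (u - s)) = ∫ u in a..b, f s • φ (u - s) :=
      (intervalIntegral.integral_of_le hab).symm
    rw [h1, intervalIntegral.integral_smul, intervalIntegral.integral_comp_sub_right _ s,
      ← intervalIntegral.integral_interval_sub_left (hPint (b - s)) (hPint (a - s))]
    rfl
  calc (∫ u in a..b, scConv f φ u) = ∫ u in I, ∫ s, f s • φ (u - s) :=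
        intervalIntegral.integral_of_le hab
    _ = ∫ s, ∫ u in I, f s • φ (u - s) := swap
    _ = ∫ s, f s • (P φ (b - s) - P φ (a - s)) := by simp only [inner]
    _ = (∫ s, f s • P φ (b - s)) - ∫ s, f s • P φ (a - s) := by
        simp_rw [smul_sub]
        exact integral_sub (integrand_integrable hf hPφ b) (integrand_integrable hf hPφ a)
    _ = scConv f (P φ) b - scConv f (P φ) a := rfl

lemma key {f : ℝ → ℂ} {φ : ℝ → X} (hf : Integrable f) (hφ : EssBdd φ) (hPφ : EssBdd (P φ))
    (a b : ℝ) : (∫ u in a..b, scConv f φ u) = scConv f (P φ) b - scConv f (P φ) a := by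
  rcases le_total a b with hab | hab
  · exact key_le hf hφ hPφ hab
  · rw [intervalIntegral.integral_symm, key_le hf hφ hPφ hab, neg_sub]

lemma ae_zero_of_intervalIntegral_zero {g : ℝ → X}
    (hg : LocallyIntegrable g (volume : Measure ℝ))
    (h : ∀ a b : ℝ, (∫ u in a..b, g u) = 0) : ∀ᵐ t : ℝ, g t = 0 := by
  filter_upwards [IsUnifLocDoublingMeasure.ae_tendsto_average (volume : Measure ℝ) hg 1]
    with x hx
  have hmem : ∀ᶠ j in 𝓝[>] (0:ℝ), x ∈ Metric.closedBall ((fun _ : ℝ => x) j) (1 * id j) := by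
    filter_upwards [self_mem_nhdsWithin] with j hj
    exact Metric.mem_closedBall_self (by simpa using le_of_lt hj)
  have hten := hx (fun _ : ℝ => x) id tendsto_id hmem
  have h0 : (fun δ : ℝ => (⨍ y in Metric.closedBall x δ, g y : X))
      =ᶠ[𝓝[>] (0:ℝ)] fun _ => (0:X) := by
    filter_upwards [self_mem_nhdsWithin] with δ hδ
    have hδ' : (0:ℝ) < δ := hδ
    rw [setAverage_eq, Real.closedBall_eq_Icc, integral_Icc_eq_integral_Ioc,
      ← intervalIntegral.integral_of_le (by linarith : x - δ ≤ x + δ), h, smul_zero]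
  have hz : Tendsto (fun δ : ℝ => (⨍ y in Metric.closedBall x δ, g y : X)) (𝓝[>] 0) (𝓝 0) :=
    Tendsto.congr' h0.symm tendsto_const_nhds
  exact tendsto_nhds_unique hten hz

lemma eq_const_of_ae {g : ℝ → X} (hg : Continuous g) {c : X}
    (h : ∀ᵐ t : ℝ, g t = c) : ∀ t, g t = c := by
  have := (hg.ae_eq_iff_eq (volume : Measure ℝ) continuous_const).mp h
  exact fun t => congrFun this t

lemma FT_integrand_integrable {f : ℝ → ℂ} (hf : Integrable f) (ω : ℝ) :
    Integrable (fun t : ℝ => f t * Complex.exp (-(Complex.I * ω * t))) := by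
  refine hf.norm.mono' (hf.aestronglyMeasurable.mul
    (Continuous.aestronglyMeasurable (by continuity))) (ae_of_all _ fun t => ?_)
  rw [norm_mul]
  have h1 : ‖Complex.exp (-(Complex.I * (ω : ℂ) * (t : ℝ)))‖ = 1 := by
    rw [Complex.norm_exp]
    simp
  rw [h1, mul_one]

end SpecAux

open SpecAux in
theorem spec_primitive_subset (φ : ℝ → X) (hφ : EssBdd φ) (hPφ : EssBdd (P φ)) :
    BSpec φ ⊆ BSpec (P φ) ∧ BSpec (P φ) ⊆ BSpec φ ∪ {0} := by
  obtain ⟨hφm, C, hφC⟩ := hφ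
  have hφ' : EssBdd φ := ⟨hφm, C, hφC⟩
  constructor
  · -- BSpec φ ⊆ BSpec (P φ)
    intro ω hω f hf hconv
    set G := scConv f φ with hG
    set F := scConv f (P φ) with hF
    have hkey : ∀ a b : ℝ, (∫ u in a..b, G u) = F b - F a := key hf hφ' hPφ
    have hGm : AEStronglyMeasurable G (volume : Measure ℝ) := scConv_aesm hf hφ'
    have hGb : ∀ᵐ t : ℝ, ‖G t‖ ≤ ∫ s, ‖f s‖ * C :=
      ae_of_all _ (scConv_bound hf hφ' hφC)
    have hGloc : LocallyIntegrable G (volume : Measure ℝ) := essBdd_locallyIntegrable hGm hGb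
    have hGii : ∀ a b : ℝ, IntervalIntegrable G volume a b :=
      essBdd_intervalIntegrable hGm hGb
    have hΦcont : Continuous (fun t : ℝ => ∫ u in (0:ℝ)..t, G u) :=
      intervalIntegral.continuous_primitive hGii 0
    have hae : ∀ᵐ t : ℝ, (fun t : ℝ => ∫ u in (0:ℝ)..t, G u) t = -F 0 := by
      filter_upwards [hconv] with t ht
      rw [hkey 0 t, show F t = 0 from ht, zero_sub]
    have hall : ∀ t : ℝ, (∫ u in (0:ℝ)..t, G u) = -F 0 := eq_const_of_ae hΦcont hae
    have hF0 : ∀ t : ℝ, F t = 0 := by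
      intro t
      have h1 := hall t
      rw [hkey 0 t] at h1
      have : F t - F 0 + F 0 = -F 0 + F 0 := by rw [h1]
      simpa using this
    have hGz : ∀ᵐ t : ℝ, G t = 0 := by
      refine ae_zero_of_intervalIntegral_zero hGloc fun a b => ?_
      rw [hkey a b, hF0, hF0, sub_self]
    exact hω f hf hGz
  · -- BSpec (P φ) ⊆ BSpec φ ∪ {0}
    intro ω hω
    by_cases h0 : ω = 0
    · exact Or.inr h0
    · left
      intro f hf hGz
      set G := scConv f φ with hG
      set F := scConv f (P φ) with hF
      have hkey : ∀ a b : ℝ, (∫ u in a..b, G u) = F b - F a := key hf hφ' hPφ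
      have hFc : ∀ t : ℝ, F t = F 0 := by
        intro t
        have h1 := hkey 0 t
        have h2 : (∫ u in (0:ℝ)..t, G u) = 0 := by
          have : (∫ u in (0:ℝ)..t, G u) = ∫ u in (0:ℝ)..t, (0 : X) :=
            intervalIntegral.integral_congr_ae (by filter_upwards [hGz] with u hu _ using hu)
          simpa using this
        rw [h2] at h1
        exact (sub_eq_zero.mp h1.symm)
      set a : ℝ := Real.pi / ω with ha
      set g : ℝ → ℂ := fun s => f (s - a) - f s with hg
      have hgi : Integrable g := (hf.comp_sub_right a).sub hf
      have hgconv : ∀ t : ℝ, scConv g (P φ) t = 0 := by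
        intro t
        have hsplit : scConv g (P φ) t
            = scConv (fun s => f (s - a)) (P φ) t - scConv f (P φ) t := by
          unfold scConv
          rw [← integral_sub (integrand_integrable (hf.comp_sub_right a) hPφ t)
            (integrand_integrable hf hPφ t)]
          simp [hg, sub_smul]
        have htrans : scConv (fun s => f (s - a)) (P φ) t = scConv f (P φ) (t - a) := by
          unfold scConv
          have h := integral_sub_right_eq_self (μ := (volume : Measure ℝ))
            (fun x => f x • P φ (t - a - x)) a
          have h2 : ∀ x : ℝ, t - a - (x - a) = t - x := by intro x; ring
          simp only [h2] at h
          exact h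
        rw [hsplit, htrans, ← hF, hFc (t - a), hFc t, sub_self]
      have hFT := hω g hgi (ae_of_all _ hgconv)
      -- Now compute FT g ω = (exp(-(I ω a)) - 1) * FT f ω
      set E : ℝ → ℂ := fun t => Complex.exp (-(Complex.I * ω * t)) with hE
      have hint1 : Integrable (fun t : ℝ => f (t - a) * E t) := by
        refine (hf.norm.comp_sub_right a).mono'
          (((hf.aestronglyMeasurable.comp_quasiMeasurePreserving
            (measurePreserving_sub_right volume a).quasiMeasurePreserving)).mul
            (Continuous.aestronglyMeasurable (by continuity)))
          (ae_of_all _ fun t => ?_)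
        rw [norm_mul]
        have h1 : ‖E t‖ = 1 := by
          rw [hE, Complex.norm_exp]
          simp
        rw [h1, mul_one]
      have hint2 : Integrable (fun t : ℝ => f t * E t) := FT_integrand_integrable hf ω
      have hsub : FT g ω = (∫ t : ℝ, f (t - a) * E t) - ∫ t : ℝ, f t * E t := by
        rw [FT]
        rw [show (fun t : ℝ => g t * Complex.exp (-(Complex.I * ω * t)))
            = fun t : ℝ => f (t - a) * E t - f t * E t by
          funext t; rw [hg, hE]; ring]
        exact integral_sub hint1 hint2
      have hshift : (∫ t : ℝ, f (t - a) * E t)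
          = Complex.exp (-(Complex.I * ω * a)) * ∫ t : ℝ, f t * E t := by
        have h := integral_sub_right_eq_self (μ := (volume : Measure ℝ))
          (fun x => f x * E (x + a)) a
        have h2 : ∀ t : ℝ, f (t - a) * E (t - a + a) = f (t - a) * E t := by
          intro t; rw [sub_add_cancel]
        simp only [h2] at h
        rw [h]
        have h3 : ∀ x : ℝ, f x * E (x + a) = Complex.exp (-(Complex.I * ω * a)) * (f x * E x) := by
          intro x
          simp only [hE]
          rw [show -(Complex.I * (ω : ℂ) * ((x + a : ℝ) : ℂ))
              = -(Complex.I * ω * a) + -(Complex.I * ω * x) by push_cast; ring]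
          rw [Complex.exp_add]
          ring
        simp only [h3]
        exact integral_const_mul _ _
      have hωc : (ω : ℂ) ≠ 0 := Complex.ofReal_ne_zero.mpr h0
      have hexp : Complex.exp (-(Complex.I * ω * a)) = -1 := by
        rw [show -(Complex.I * (ω : ℂ) * ((a : ℝ) : ℂ)) = -((Real.pi : ℂ) * Complex.I) by
          rw [ha]; push_cast; field_simp]
        rw [Complex.exp_neg, Complex.exp_pi_mul_I]
        norm_num
      have : FT g ω = (-2 : ℂ) * FT f ω := by
        rw [hsub, hshift, hexp, FT]
        ring
      rw [hFT] at this
      exact (mul_eq_zero.mp this.symm).resolve_left (by norm_num)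

end
end

section
/- Let φ ∈ L∞(ℝ, X) and f ∈ L¹(ℝ, ℂ), and let U be the interior of the set {λ ∈ ℝ : f̂(λ) = 1}. Then sp(φ − φ * f) ⊆ sp(φ) \ U. -/
open MeasureTheory Filter Topology

noncomputable section

variable {X : Type*} [NormedAddCommGroup X] [NormedSpace ℂ X] [CompleteSpace X]

set_option linter.unusedSectionVars false
set_option linter.unusedVariables false
set_option maxHeartbeats 1000000

open scoped Convolution FourierTransform Real
open Function ContinuousLinearMap SchwartzMap

section Helpers

variable {u : ℝ → X} {C : ℝ} {g f a b : ℝ → ℂ}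

lemma scConv_eq (g : ℝ → ℂ) (u : ℝ → X) :
    scConv g u = g ⋆[ContinuousLinearMap.lsmul ℂ ℂ, volume] u := by
  funext t; simp [scConv, convolution_def]

lemma ae_comp_sub_left {α : Type*} {u v : ℝ → α} (h : u =ᵐ[volume] v) (t : ℝ) :
    (fun s => u (t - s)) =ᵐ[volume] (fun s => v (t - s)) :=
  (quasiMeasurePreserving_sub_left (volume : Measure ℝ) t).ae_eq_comp h

lemma scConv_congr_right {u v : ℝ → X} (h : u =ᵐ[volume] v) (g : ℝ → ℂ) (t : ℝ) :
    scConv g u t = scConv g v t := by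
  refine integral_congr_ae ?_
  filter_upwards [ae_comp_sub_left h t] with s hs
  rw [hs]

lemma scConv_zero_of_ae_zero {u : ℝ → X} (h : u =ᵐ[volume] 0) (g : ℝ → ℂ) (t : ℝ) :
    scConv g u t = 0 := by
  rw [scConv_congr_right h]
  simp [scConv]

lemma bspec_congr {u v : ℝ → X} (h : u =ᵐ[volume] v) : BSpec u = BSpec v := by
  ext ω
  constructor <;> intro hω g hg h0 <;> refine hω g hg ?_ <;>
    [skip; skip] <;> filter_upwards [h0] with t ht
  · rwa [scConv_congr_right h]
  · rwa [scConv_congr_right h.symm]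

lemma integrable_smul_bdd' {v : ℝ → X} {D : ℝ} (hg : Integrable g)
    (hv : AEStronglyMeasurable v volume) (hD : ∀ t, ‖v t‖ ≤ D) (t : ℝ) :
    Integrable (fun s => g s • v (t - s)) := by
  have meas : AEStronglyMeasurable (fun s => g s • v (t - s)) volume :=
    hg.aestronglyMeasurable.smul
      (hv.comp_quasiMeasurePreserving (quasiMeasurePreserving_sub_left volume t))
  refine (hg.norm.mul_const D).mono' meas (ae_of_all _ fun s => ?_)
  simp only [norm_smul]
  exact mul_le_mul_of_nonneg_left (hD _) (norm_nonneg _)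

lemma aesm_scConv (hg : Integrable g) (hm : StronglyMeasurable u) :
    AEStronglyMeasurable (scConv g u) volume := by
  rw [scConv_eq]
  exact (hg.aestronglyMeasurable.convolution_integrand (ContinuousLinearMap.lsmul ℂ ℂ)
    hm.aestronglyMeasurable).integral_prod_right'

lemma norm_scConv_le (hg : Integrable g) (hm : StronglyMeasurable u)
    (hC : ∀ t, ‖u t‖ ≤ C) (t : ℝ) :
    ‖scConv g u t‖ ≤ (∫ s, ‖g s‖) * C := by
  refine (norm_integral_le_integral_norm _).trans ?_
  rw [← integral_mul_const]
  refine integral_mono_of_nonneg (ae_of_all _ fun s => norm_nonneg _)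
    (hg.norm.mul_const C) (ae_of_all _ fun s => ?_)
  simp only [norm_smul]
  exact mul_le_mul_of_nonneg_left (hC _) (norm_nonneg _)

lemma normconv_integrable (hf : Integrable f) (hm : StronglyMeasurable u)
    (hC : ∀ t, ‖u t‖ ≤ C) (x : ℝ) :
    Integrable (fun s => ‖f s‖ * ‖u (x - s)‖) := by
  have meas : AEStronglyMeasurable (fun s => ‖f s‖ * ‖u (x - s)‖) volume :=
    hf.norm.aestronglyMeasurable.mul
      ((hm.norm.comp_measurable (measurable_const.sub measurable_id)).aestronglyMeasurable)
  refine (hf.norm.mul_const C).mono' meas (ae_of_all _ fun s => ?_)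
  rw [Real.norm_eq_abs, abs_mul, abs_norm, abs_norm]
  exact mul_le_mul_of_nonneg_left (hC _) (norm_nonneg _)

lemma conv_assoc_pt (hg : Integrable g) (hf : Integrable f) (hm : StronglyMeasurable u)
    (hC : ∀ t, ‖u t‖ ≤ C) (t : ℝ) :
    ((g ⋆[ContinuousLinearMap.mul ℂ ℂ, volume] f) ⋆[ContinuousLinearMap.lsmul ℂ ℂ, volume] u) t
      = (g ⋆[ContinuousLinearMap.lsmul ℂ ℂ, volume]
          (f ⋆[ContinuousLinearMap.lsmul ℂ ℂ, volume] u)) t := by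
  refine convolution_assoc (ContinuousLinearMap.mul ℂ ℂ) (ContinuousLinearMap.lsmul ℂ ℂ)
    (ContinuousLinearMap.lsmul ℂ ℂ) (ContinuousLinearMap.lsmul ℂ ℂ)
    (fun x y z => mul_smul x y z) hg.aestronglyMeasurable hf.aestronglyMeasurable
    hm.aestronglyMeasurable (hg.ae_convolution_exists _ hf) ?_ ?_
  · exact ae_of_all _ fun x => by
      simpa [ConvolutionExistsAt] using normconv_integrable hf hm hC x
  · have convm : AEStronglyMeasurable
        ((fun y => ‖f y‖) ⋆[ContinuousLinearMap.mul ℝ ℝ, volume] fun y => ‖u y‖) volume :=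
      (hf.norm.aestronglyMeasurable.convolution_integrand (ContinuousLinearMap.mul ℝ ℝ)
        hm.norm.aestronglyMeasurable).integral_prod_right'
    have convb : ∀ y, ‖((fun y => ‖f y‖) ⋆[ContinuousLinearMap.mul ℝ ℝ, volume]
        fun y => ‖u y‖) y‖ ≤ (∫ s, ‖f s‖) * C := by
      intro y
      rw [Real.norm_eq_abs]
      have h1 : ((fun y => ‖f y‖) ⋆[ContinuousLinearMap.mul ℝ ℝ, volume] fun y => ‖u y‖) y
          = ∫ s, ‖f s‖ * ‖u (y - s)‖ := by simp [convolution_def]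
      rw [h1, abs_of_nonneg (integral_nonneg fun s => by positivity)]
      rw [← integral_mul_const]
      refine integral_mono_of_nonneg (ae_of_all _ fun s => by positivity)
        (hf.norm.mul_const C) (ae_of_all _ fun s => ?_)
      exact mul_le_mul_of_nonneg_left (hC _) (norm_nonneg _)
    have meas2 : AEStronglyMeasurable (fun s => ‖g s‖ *
        ((fun y => ‖f y‖) ⋆[ContinuousLinearMap.mul ℝ ℝ, volume] fun y => ‖u y‖) (t - s))
        volume :=
      hg.norm.aestronglyMeasurable.mul
        (convm.comp_quasiMeasurePreserving (quasiMeasurePreserving_sub_left volume t))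
    have : Integrable (fun s => ‖g s‖ *
        ((fun y => ‖f y‖) ⋆[ContinuousLinearMap.mul ℝ ℝ, volume] fun y => ‖u y‖) (t - s)) := by
      refine (hg.norm.mul_const ((∫ s, ‖f s‖) * C)).mono' meas2 (ae_of_all _ fun s => ?_)
      rw [Real.norm_eq_abs, abs_mul, abs_norm]
      refine mul_le_mul_of_nonneg_left ?_ (norm_nonneg _)
      rw [← Real.norm_eq_abs]
      exact convb _
    simpa [ConvolutionExistsAt] using this

lemma mul_flip_eq : (ContinuousLinearMap.mul ℂ ℂ).flip = ContinuousLinearMap.mul ℂ ℂ := by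
  ext x y
  simp [mul_comm]

lemma conv_comm (g f : ℝ → ℂ) :
    g ⋆[ContinuousLinearMap.mul ℂ ℂ, volume] f
      = f ⋆[ContinuousLinearMap.mul ℂ ℂ, volume] g := by
  conv_lhs => rw [← mul_flip_eq, MeasureTheory.convolution_flip]

lemma scConv_scConv (hg : Integrable g) (hf : Integrable f) (hm : StronglyMeasurable u)
    (hC : ∀ t, ‖u t‖ ≤ C) (t : ℝ) :
    scConv g (scConv f u) t
      = ((f ⋆[ContinuousLinearMap.mul ℂ ℂ, volume] g)
          ⋆[ContinuousLinearMap.lsmul ℂ ℂ, volume] u) t := by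
  rw [scConv_eq f u, scConv_eq g, conv_comm f g, conv_assoc_pt hg hf hm hC t]

lemma scConv_swap (hg : Integrable g) (hf : Integrable f) (hm : StronglyMeasurable u)
    (hC : ∀ t, ‖u t‖ ≤ C) (t : ℝ) :
    scConv g (scConv f u) t = scConv f (scConv g u) t := by
  rw [scConv_scConv hg hf hm hC t, scConv_scConv hf hg hm hC t, conv_comm]

lemma scConv_sub_pt (hg : Integrable g) (hf : Integrable f) (hm : StronglyMeasurable u)
    (hC : ∀ t, ‖u t‖ ≤ C) (t : ℝ) :
    scConv g (fun x => u x - scConv f u x) t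
      = scConv g u t - scConv g (scConv f u) t := by
  have i1 : Integrable (fun s => g s • u (t - s)) :=
    integrable_smul_bdd' hg hm.aestronglyMeasurable hC t
  have i2 : Integrable (fun s => g s • scConv f u (t - s)) :=
    integrable_smul_bdd' hg (aesm_scConv hf hm) (norm_scConv_le hf hm hC) t
  have : scConv g (fun x => u x - scConv f u x) t
      = ∫ s, (g s • u (t - s) - g s • scConv f u (t - s)) := by
    simp only [scConv, smul_sub]
  rw [this, integral_sub i1 i2]
  rfl

end Helpers

section FTlemmas

variable {g f a b : ℝ → ℂ}

lemma norm_expc (l t : ℝ) : ‖Complex.exp (-(Complex.I * l * t))‖ = 1 := by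
  rw [Complex.norm_exp]
  norm_num [Complex.exp_re]

lemma continuous_expc (l : ℝ) : Continuous fun t : ℝ => Complex.exp (-(Complex.I * l * t)) := by
  fun_prop

lemma integrable_mul_expc (ha : Integrable a) (l : ℝ) :
    Integrable fun t => a t * Complex.exp (-(Complex.I * l * t)) := by
  have := ha.bdd_mul (continuous_expc l).aestronglyMeasurable
    (c := 1) (ae_of_all _ fun t => le_of_eq (norm_expc l t))
  simpa [mul_comm] using this

lemma FT_sub (ha : Integrable a) (hb : Integrable b) (l : ℝ) :
    FT (fun t => a t - b t) l = FT a l - FT b l := by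
  unfold FT
  simp only [sub_mul]
  rw [integral_sub (integrable_mul_expc ha l) (integrable_mul_expc hb l)]

lemma FT_conv (hf : Integrable f) (hg : Integrable g) (l : ℝ) :
    FT (f ⋆[ContinuousLinearMap.mul ℂ ℂ, volume] g) l = FT f l * FT g l := by
  set e : ℝ → ℂ := fun t => Complex.exp (-(Complex.I * l * t)) with he
  have he_add : ∀ x y : ℝ, e (x + y) = e x * e y := by
    intro x y
    rw [he]
    simp only
    rw [← Complex.exp_add]
    congr 1
    push_cast
    ring
  have hint : Integrable (uncurry fun t s => (f s * g (t - s)) * e t)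
      (volume.prod volume) := by
    have base : Integrable (fun p : ℝ × ℝ => f p.2 * g (p.1 - p.2)) (volume.prod volume) := by
      have := hf.convolution_integrand (ContinuousLinearMap.mul ℂ ℂ) hg
      simpa using this
    have := base.bdd_mul
      (((continuous_expc l).comp continuous_fst).aestronglyMeasurable)
      (c := 1) (ae_of_all _ fun p => le_of_eq (norm_expc l p.1))
    refine this.congr (ae_of_all _ fun p => ?_)
    simp only [uncurry, Function.comp_apply, he]
    ring
  calc FT (f ⋆[ContinuousLinearMap.mul ℂ ℂ, volume] g) l
      = ∫ t, (∫ s, f s * g (t - s)) * e t := by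
        simp only [FT, convolution_def, ContinuousLinearMap.mul_apply', he]
    _ = ∫ t, ∫ s, (f s * g (t - s)) * e t := by
        congr 1
        funext t
        rw [integral_mul_const]
    _ = ∫ s, ∫ t, (f s * g (t - s)) * e t := integral_integral_swap hint
    _ = ∫ s, (f s * e s) * ∫ x, g x * e x := by
        congr 1
        funext s
        have h1 : ∫ t, (f s * g (t - s)) * e t = f s * ∫ t, g (t - s) * e t := by
          simp only [mul_assoc]
          rw [integral_const_mul]
        rw [h1]
        have h2 : ∫ t, g (t - s) * e t = (∫ x, g x * e x) * e s := by
          rw [← integral_add_right_eq_self (fun t => g (t - s) * e t) s]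
          simp only [add_sub_cancel_right]
          simp_rw [he_add]
          simp only [← mul_assoc]
          rw [integral_mul_const]
        rw [h2]
        ring
    _ = (∫ s, f s * e s) * ∫ x, g x * e x := by rw [integral_mul_const]
    _ = FT f l * FT g l := rfl

lemma FT_eq_fourier (h : ℝ → ℂ) (w : ℝ) : FT h w = 𝓕 h (w / (2 * π)) := by
  rw [Real.fourier_real_eq_integral_exp_smul]
  unfold FT
  congr 1
  funext v
  rw [smul_eq_mul, mul_comm]
  congr 2
  have hπ : (π : ℂ) ≠ 0 := Complex.ofReal_ne_zero.mpr Real.pi_ne_zero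
  push_cast
  field_simp

lemma fourier_eq_FT (h : ℝ → ℂ) (ξ : ℝ) : 𝓕 h ξ = FT h (2 * π * ξ) := by
  rw [FT_eq_fourier]
  congr 1
  field_simp

lemma eq_zero_of_FT_zero {h : ℝ → ℂ} (hc : Continuous h) (hi : Integrable h)
    (h0 : ∀ w, FT h w = 0) : ∀ t, h t = 0 := by
  have h2 : 𝓕 h = 0 := by
    funext ξ
    rw [fourier_eq_FT]
    exact h0 _
  have h3 := hc.fourierInv_fourier_eq hi (by rw [h2]; exact integrable_zero _ _ _)
  rw [h2] at h3
  have h4 : 𝓕⁻ (0 : ℝ → ℂ) = 0 := by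
    funext x
    simp [Real.fourierInv_eq]
  rw [h4] at h3
  intro t
  exact (congrFun h3 t).symm

def toSchwartz (χ : ℝ → ℂ) (h1 : ContDiff ℝ ((⊤ : ℕ∞) : WithTop ℕ∞) χ)
    (h2 : HasCompactSupport χ) : SchwartzMap ℝ ℂ where
  toFun := χ
  smooth' := h1
  decay' := by
    intro k n
    have h3 : HasCompactSupport (iteratedFDeriv ℝ n χ) := h2.iteratedFDeriv n
    have h4 : Continuous fun x : ℝ => ‖x‖ ^ k * ‖iteratedFDeriv ℝ n χ x‖ :=
      (continuous_norm.pow k).mul (h1.continuous_iteratedFDeriv (mod_cast le_top)).norm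
    have h5 : HasCompactSupport fun x : ℝ => ‖x‖ ^ k * ‖iteratedFDeriv ℝ n χ x‖ :=
      h3.norm.mul_left
    obtain ⟨x0, hx0⟩ := h4.exists_forall_ge_of_hasCompactSupport h5
    exact ⟨_, fun x => hx0 x⟩

end FTlemmas

section Core

variable {u : ℝ → X} {C : ℝ} {f : ℝ → ℂ} {ω : ℝ}

lemma core_part1 (hm : StronglyMeasurable u) (hC : ∀ t, ‖u t‖ ≤ C) (hf : Integrable f)
    (hω : ω ∈ BSpec (fun t => u t - scConv f u t)) : ω ∈ BSpec u := by
  intro g hg h0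
  refine hω g hg ?_
  have h0' : scConv g u =ᵐ[volume] 0 := h0
  have hz : ∀ t, scConv g (scConv f u) t = 0 := fun t => by
    rw [scConv_swap hg hf hm hC t]
    exact scConv_zero_of_ae_zero h0' f t
  filter_upwards [h0] with t ht
  rw [scConv_sub_pt hg hf hm hC t, hz t, ht, sub_zero]

lemma core_part2 (hm : StronglyMeasurable u) (hC : ∀ t, ‖u t‖ ≤ C) (hf : Integrable f)
    (hω : ω ∈ BSpec (fun t => u t - scConv f u t)) :
    ω ∉ interior {w : ℝ | FT f w = 1} := by
  intro hωint
  set c : ℝ := ω / (2 * π) with hc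
  have h2π : (2 * π) ≠ 0 := by positivity
  have hVopen : IsOpen ((fun ξ : ℝ => 2 * π * ξ) ⁻¹' interior {w : ℝ | FT f w = 1}) :=
    isOpen_interior.preimage (by fun_prop)
  have hcV : c ∈ (fun ξ : ℝ => 2 * π * ξ) ⁻¹' interior {w : ℝ | FT f w = 1} := by
    show 2 * π * c ∈ interior {w : ℝ | FT f w = 1}
    have : 2 * π * c = ω := by rw [hc]; field_simp
    rwa [this]
  obtain ⟨ε, εpos, hball⟩ := Metric.isOpen_iff.1 hVopen c hcV
  set bump : ContDiffBump c := ⟨ε / 2, ε, by positivity, by linarith⟩ with hbump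
  set χ : ℝ → ℂ := fun x => ((bump x : ℝ) : ℂ) with hχ
  have hχ1 : ContDiff ℝ ((⊤ : ℕ∞) : WithTop ℕ∞) χ :=
    Complex.ofRealCLM.contDiff.comp bump.contDiff
  have hχ2 : HasCompactSupport χ :=
    bump.hasCompactSupport.comp_left (g := fun r : ℝ => (r : ℂ)) Complex.ofReal_zero
  set χS : SchwartzMap ℝ ℂ := toSchwartz χ hχ1 hχ2 with hχS
  set gS : SchwartzMap ℝ ℂ := (FourierTransform.fourierCLE ℂ (SchwartzMap ℝ ℂ)).symm χS with hgS
  have hg𝓕 : 𝓕 ⇑gS = ⇑χS := by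
    rw [← SchwartzMap.fourier_coe, hgS, FourierTransform.fourierCLE_symm_apply,
      FourierInvPair.fourier_fourierInv_eq]
  have hFTg : ∀ w, FT (⇑gS) w = χ (w / (2 * π)) := by
    intro w
    rw [FT_eq_fourier, hg𝓕]
    rfl
  have hFTgω : FT (⇑gS) ω = 1 := by
    rw [hFTg, ← hc]
    show ((bump c : ℝ) : ℂ) = 1
    rw [bump.one_of_mem_closedBall (Metric.mem_closedBall_self (by positivity))]
    norm_num
  have hsupp : ∀ w, FT (⇑gS) w ≠ 0 → FT f w = 1 := by
    intro w hw
    rw [hFTg] at hw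
    have hb : bump (w / (2 * π)) ≠ 0 := by
      intro h0
      apply hw
      show ((bump (w / (2 * π)) : ℝ) : ℂ) = 0
      rw [h0]
      norm_num
    have hmem : w / (2 * π) ∈ Function.support bump := hb
    rw [bump.support_eq] at hmem
    have := hball hmem
    have h2 : 2 * π * (w / (2 * π)) ∈ interior {w : ℝ | FT f w = 1} := this
    have h3 : 2 * π * (w / (2 * π)) = w := by field_simp
    rw [h3] at h2
    have h4 : w ∈ {w : ℝ | FT f w = 1} := interior_subset h2
    exact h4
  -- show f ⋆ gS = gS
  have hconv_int : Integrable (f ⋆[ContinuousLinearMap.mul ℂ ℂ, volume] ⇑gS) :=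
    hf.integrable_convolution (ContinuousLinearMap.mul ℂ ℂ) gS.integrable
  have hgbdd : BddAbove (Set.range fun x => ‖gS x‖) := by
    refine ⟨(SchwartzMap.seminorm ℝ 0 0) gS, ?_⟩
    rintro y ⟨x, rfl⟩
    exact SchwartzMap.norm_le_seminorm ℝ gS x
  have hconv_cont : Continuous (f ⋆[ContinuousLinearMap.mul ℂ ℂ, volume] ⇑gS) :=
    hgbdd.continuous_convolution_right_of_integrable _ hf gS.continuous
  have hFTdiff : ∀ w,
      FT (fun t => (f ⋆[ContinuousLinearMap.mul ℂ ℂ, volume] ⇑gS) t - gS t) w = 0 := by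
    intro w
    rw [FT_sub hconv_int gS.integrable, FT_conv hf gS.integrable]
    by_cases hgw : FT (⇑gS) w = 0
    · rw [hgw]; ring
    · rw [hsupp w hgw]; ring
  have hzero := eq_zero_of_FT_zero (hconv_cont.sub gS.continuous)
    (hconv_int.sub gS.integrable) hFTdiff
  have hfg : (f ⋆[ContinuousLinearMap.mul ℂ ℂ, volume] ⇑gS) = ⇑gS := by
    funext t
    have := hzero t
    exact sub_eq_zero.mp this
  -- conclude
  have hmain : ∀ t, scConv (⇑gS) (fun x => u x - scConv f u x) t = 0 := by
    intro t
    rw [scConv_sub_pt gS.integrable hf hm hC t,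
      scConv_scConv gS.integrable hf hm hC t, hfg, ← scConv_eq, sub_self]
  have := hω (⇑gS) gS.integrable (ae_of_all _ hmain)
  rw [hFTgω] at this
  exact one_ne_zero this

end Core

theorem spec_sub_conv_subset (φ : ℝ → X) (hφ : EssBdd φ)
    (f : ℝ → ℂ) (hf : Integrable f) :
    BSpec (fun t => φ t - scConv f φ t) ⊆
      BSpec φ \ interior {ω : ℝ | FT f ω = 1} := by
  intro ω hω
  obtain ⟨hmeas, C, hC⟩ := hφ
  set u : ℝ → X := Set.indicator {t | ‖hmeas.mk φ t‖ ≤ C} (hmeas.mk φ) with hu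
  have hmset : MeasurableSet {t : ℝ | ‖hmeas.mk φ t‖ ≤ C} :=
    hmeas.stronglyMeasurable_mk.norm.measurable measurableSet_Iic
  have hm : StronglyMeasurable u := hmeas.stronglyMeasurable_mk.indicator hmset
  have hCb : ∀ t, ‖u t‖ ≤ max C 0 := by
    intro t
    rw [hu]
    by_cases ht : t ∈ {t : ℝ | ‖hmeas.mk φ t‖ ≤ C}
    · rw [Set.indicator_of_mem ht]
      exact le_max_of_le_left ht
    · rw [Set.indicator_of_notMem ht]
      simp
  have huφ : u =ᵐ[volume] φ := by
    filter_upwards [hmeas.ae_eq_mk, hC] with t h1 h2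
    have ht : t ∈ {t : ℝ | ‖hmeas.mk φ t‖ ≤ C} := by
      show ‖hmeas.mk φ t‖ ≤ C
      rw [← h1]
      exact h2
    rw [hu, Set.indicator_of_mem ht, ← h1]
  have hψ : (fun t => φ t - scConv f φ t) =ᵐ[volume] (fun t => u t - scConv f u t) := by
    filter_upwards [huφ] with t ht
    rw [← ht, scConv_congr_right huφ f t]
  have hω' : ω ∈ BSpec (fun t => u t - scConv f u t) := by
    rwa [bspec_congr hψ] at hω
  constructor
  · have h1 : ω ∈ BSpec u := core_part1 hm hCb hf hω'
    intro g hg h0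
    refine h1 g hg ?_
    filter_upwards [h0] with t ht
    rwa [scConv_congr_right huφ g t]
  · exact core_part2 hm hCb hf hω'

end
end

section
/- Let A generate a bounded holomorphic C₀-semigroup on X and let b > 0 be such that ‖R(iλ, A)‖ ≤ M/|λ| for |λ| ≥ b. Then for every t > 0 the improper Riemann integral J(t) = ∫_b^∞ R(iλ, A) sin(λt) dλ exists and sup_{t>0} ‖J(t)‖ < ∞. -/
open MeasureTheory Filter Topology

noncomputable section

variable {X : Type*} [NormedAddCommGroup X] [NormedSpace ℂ X] [CompleteSpace X]

/-- `T` is a `C₀`-semigroup on `X`. -/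
structure IsC0Semigroup (T : ℝ → X →L[ℂ] X) : Prop where
  map_zero : T 0 = 1
  map_add : ∀ s t : ℝ, 0 ≤ s → 0 ≤ t → T (s + t) = (T s).comp (T t)
  strong_cont : ∀ x : X, ContinuousOn (fun t => T t x) (Set.Ici (0 : ℝ))

/-- `A : D(A) → X` is the generator of the semigroup `T`. -/
structure IsGeneratorOf (T : ℝ → X →L[ℂ] X) (D : Submodule ℂ X) (A : D →ₗ[ℂ] X) : Prop where
  mem_iff : ∀ x : X, x ∈ D ↔
    ∃ y : X, Tendsto (fun h : ℝ => h⁻¹ • (T h x - x)) (𝓝[>] 0) (𝓝 y)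
  tendsto : ∀ x : D,
    Tendsto (fun h : ℝ => h⁻¹ • (T h (x : X) - (x : X))) (𝓝[>] 0) (𝓝 (A x))

/-- The semigroup `T` is holomorphic: it extends holomorphically to a sector
`{z ≠ 0, |arg z| < θ}` around the positive real axis. -/
def IsHolomorphicSG (T : ℝ → X →L[ℂ] X) : Prop :=
  ∃ θ : ℝ, 0 < θ ∧ ∃ S : ℂ → X →L[ℂ] X,
    (∀ t : ℝ, 0 < t → S (t : ℂ) = T t) ∧
    DifferentiableOn ℂ S {z : ℂ | z ≠ 0 ∧ |Complex.arg z| < θ}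

/-- `R` is the resolvent `R(μ, A) = (μ - A)⁻¹` of `(D, A)` at `μ`. -/
def IsResolventOf (D : Submodule ℂ X) (A : D →ₗ[ℂ] X) (μ : ℂ) (R : X →L[ℂ] X) : Prop :=
  (∀ x : X, ∃ h : R x ∈ D, μ • R x - A ⟨R x, h⟩ = x) ∧
  ∀ x : D, R (μ • (x : X) - A x) = (x : X)

/-- The resolvent set `ρ(A)` of the (possibly unbounded) operator `(D, A)`. -/
def resolventSetOf (D : Submodule ℂ X) (A : D →ₗ[ℂ] X) : Set ℂ :=
  {μ | ∃ R : X →L[ℂ] X, IsResolventOf D A μ R}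

set_option linter.unusedSectionVars false

theorem aux_resid (D : Submodule ℂ X) (A : D →ₗ[ℂ] X) {μ μ' : ℂ} {R₁ R₂ : X →L[ℂ] X}
    (h1 : IsResolventOf D A μ R₁) (h2 : IsResolventOf D A μ' R₂) :
    R₁ - R₂ = (μ' - μ) • R₁.comp R₂ := by
  ext v
  obtain ⟨hm, hmy⟩ := h2.1 v
  set y : D := ⟨R₂ v, hm⟩ with hy
  have e1 : R₁ v = R₁ (μ' • (y : X) - A y) := by rw [hmy]
  have e2 : R₁ (μ • (y : X) - A y) = (y : X) := h1.2 y
  have : R₁ v - R₂ v = R₁ ((μ' • (y : X) - A y) - (μ • (y : X) - A y)) := by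
    rw [map_sub, ← e1, e2]
  simp only [ContinuousLinearMap.sub_apply, ContinuousLinearMap.smul_apply,
    ContinuousLinearMap.comp_apply]
  rw [this]
  have : (μ' • (y : X) - A y) - (μ • (y : X) - A y) = (μ' - μ) • (y : X) := by
    rw [sub_smul]; abel
  rw [this, _root_.map_smul]

section Aux
variable (D : Submodule ℂ X) (A : D →ₗ[ℂ] X) {b M : ℝ} (hb : 0 < b) (hM : 0 ≤ M)
  (R : ℝ → X →L[ℂ] X)
  (hR : ∀ s : ℝ, b ≤ |s| → IsResolventOf D A (Complex.I * s) (R s))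
  (hRb : ∀ s : ℝ, b ≤ |s| → ‖R s‖ ≤ M / |s|)

include hb hR hRb hM

theorem aux_norm : ∀ s, b ≤ s → ‖R s‖ ≤ M / s := by
  intro s hs
  have := hRb s (by rwa [abs_of_pos (lt_of_lt_of_le hb hs)])
  rwa [abs_of_pos (lt_of_lt_of_le hb hs)] at this

theorem aux_normb : ∀ s, b ≤ s → ‖R s‖ ≤ M / b := by
  intro s hs
  exact (aux_norm D A hb hM R hR hRb s hs).trans
    (div_le_div_of_nonneg_left hM hb hs)

theorem aux_resid' : ∀ s s', b ≤ s → b ≤ s' →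
    R s - R s' = (Complex.I * ((s' : ℂ) - s)) • (R s).comp (R s') := by
  intro s s' hs hs'
  have h1 := hR s (by rwa [abs_of_pos (lt_of_lt_of_le hb hs)])
  have h2 := hR s' (by rwa [abs_of_pos (lt_of_lt_of_le hb hs')])
  rw [aux_resid D A h1 h2, mul_sub]

theorem aux_lip : ∀ s s', b ≤ s → b ≤ s' →
    ‖R s - R s'‖ ≤ (M / b) ^ 2 * |s' - s| := by
  intro s s' hs hs'
  rw [aux_resid' D A hb hM R hR hRb s s' hs hs']
  have h1 := aux_normb D A hb hM R hR hRb s hs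
  have h2 := aux_normb D A hb hM R hR hRb s' hs'
  have e1 : ‖(Complex.I * ((s' : ℂ) - s)) • (R s).comp (R s')‖
      ≤ ‖Complex.I * ((s' : ℂ) - s)‖ * ‖(R s).comp (R s')‖ := (R s).comp (R s') |>.opNorm_smul_le (Complex.I * ((s' : ℂ) - s))
  have e2 : ‖Complex.I * ((s' : ℂ) - s)‖ = |s' - s| := by
    rw [norm_mul, Complex.norm_I, one_mul, ← Complex.ofReal_sub, Complex.norm_real,
      Real.norm_eq_abs]
  have e3 : ‖(R s).comp (R s')‖ ≤ (M / b) * (M / b) :=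
    ((R s).opNorm_comp_le (R s')).trans
      (mul_le_mul h1 h2 (norm_nonneg _) (div_nonneg hM hb.le))
  refine e1.trans ?_
  rw [e2]
  calc |s' - s| * ‖(R s).comp (R s')‖ ≤ |s' - s| * ((M / b) * (M / b)) :=
      mul_le_mul_of_nonneg_left e3 (abs_nonneg _)
    _ = (M / b) ^ 2 * |s' - s| := by ring

theorem aux_hasDeriv : ∀ s, b ≤ s → HasDerivWithinAt R
    ((-Complex.I) • ((R s).comp (R s))) (Set.Ici b) s := by
  intro s hs
  rw [hasDerivWithinAt_iff_isLittleO]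
  set K := (M / b) ^ 2 * (M / b) with hK
  have hK0 : 0 ≤ K := by positivity
  have key : ∀ y ∈ Set.Ici b,
      ‖R y - R s - (y - s) • ((-Complex.I) • ((R s).comp (R s)))‖
        ≤ K * (|y - s| * |y - s|) := by
    intro y hy
    have hy' : b ≤ y := hy
    have hid := aux_resid' D A hb hM R hR hRb y s hy' hs
    have e0 : (y - s) • ((-Complex.I) • ((R s).comp (R s)))
        = (Complex.I * ((s : ℂ) - y)) • ((R s).comp (R s)) := by
      rw [← smul_assoc]
      congr 1
      simp only [smul_eq_mul, Complex.real_smul, Complex.ofReal_sub]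
      ring
    have e1 : R y - R s - (y - s) • ((-Complex.I) • ((R s).comp (R s)))
        = (Complex.I * ((s : ℂ) - y)) • ((R y - R s).comp (R s)) := by
      rw [ContinuousLinearMap.sub_comp, smul_sub, ← hid, e0]
    rw [e1]
    have e2 : ‖Complex.I * ((s : ℂ) - y)‖ = |s - y| := by
      rw [norm_mul, Complex.norm_I, one_mul, ← Complex.ofReal_sub, Complex.norm_real,
        Real.norm_eq_abs]
    have e3 : ‖(R y - R s).comp (R s)‖ ≤ ((M / b) ^ 2 * |s - y|) * (M / b) :=
      ((R y - R s).opNorm_comp_le (R s)).trans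
        (mul_le_mul (aux_lip D A hb hM R hR hRb y s hy' hs) (aux_normb D A hb hM R hR hRb s hs)
          (norm_nonneg _) (by positivity))
    calc ‖(Complex.I * ((s : ℂ) - y)) • ((R y - R s).comp (R s))‖
        ≤ ‖Complex.I * ((s : ℂ) - y)‖ * ‖(R y - R s).comp (R s)‖ :=
          ((R y - R s).comp (R s)).opNorm_smul_le (Complex.I * ((s : ℂ) - y))
      _ ≤ |s - y| * (((M / b) ^ 2 * |s - y|) * (M / b)) := by
          rw [e2]; exact mul_le_mul_of_nonneg_left e3 (abs_nonneg _)
      _ = K * (|y - s| * |y - s|) := by rw [abs_sub_comm]; ring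
  rw [Asymptotics.isLittleO_iff]
  intro ε hε
  have htend : Filter.Tendsto (fun y : ℝ => |y - s|) (𝓝[Set.Ici b] s) (𝓝 0) := by
    have : Filter.Tendsto (fun y : ℝ => |y - s|) (𝓝 s) (𝓝 0) := by
      have := ((continuous_id.sub (continuous_const (y := s))).abs).tendsto s
      simpa using this
    exact this.mono_left nhdsWithin_le_nhds
  have h2 : ∀ᶠ y in 𝓝[Set.Ici b] s, |y - s| < ε / (K + 1) :=
    htend.eventually (gt_mem_nhds (by positivity))
  filter_upwards [self_mem_nhdsWithin, h2] with y hy hy2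
  have := key y hy
  rw [Real.norm_eq_abs]
  calc ‖R y - R s - (y - s) • ((-Complex.I) • ((R s).comp (R s)))‖
      ≤ K * (|y - s| * |y - s|) := this
    _ ≤ ε * |y - s| := by
        have h3 : K * |y - s| ≤ ε := by
          calc K * |y - s| ≤ K * (ε / (K + 1)) := mul_le_mul_of_nonneg_left hy2.le hK0
            _ = K * ε / (K + 1) := (mul_div_assoc _ _ _).symm
            _ ≤ ε := by rw [div_le_iff₀ (by linarith : (0:ℝ) < K + 1)]; nlinarith
        calc K * (|y - s| * |y - s|) = (K * |y - s|) * |y - s| := by ring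
          _ ≤ ε * |y - s| := mul_le_mul_of_nonneg_right h3 (abs_nonneg _)

theorem aux_contOn : ContinuousOn R (Set.Ici b) := fun s hs =>
  (aux_hasDeriv D A hb hM R hR hRb s hs).continuousWithinAt

end Aux


set_option maxHeartbeats 1000000 in
/-- Lemma 3.4(ii): `J(t) = ∫_b^∞ R(iλ,A) sin(λt) dλ` exists as an improper Riemann
integral for every `t > 0` and is uniformly bounded on `(0, ∞)`. -/
theorem sine_resolvent_integral_exists_and_bounded
    (T : ℝ → X →L[ℂ] X) (hT : IsC0Semigroup T) (hol : IsHolomorphicSG T)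
    (hbdd : ∃ K : ℝ, ∀ t : ℝ, 0 ≤ t → ‖T t‖ ≤ K)
    (D : Submodule ℂ X) (A : D →ₗ[ℂ] X) (hA : IsGeneratorOf T D A)
    (b M : ℝ) (hb : 0 < b)
    (R : ℝ → X →L[ℂ] X)
    (hR : ∀ s : ℝ, b ≤ |s| → IsResolventOf D A (Complex.I * s) (R s))
    (hRb : ∀ s : ℝ, b ≤ |s| → ‖R s‖ ≤ M / |s|) :
    ∃ J : ℝ → X →L[ℂ] X,
      (∀ t : ℝ, 0 < t →
        Tendsto (fun c : ℝ => ∫ l in b..c, Real.sin (l * t) • R l) atTop (𝓝 (J t))) ∧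
      ∃ C : ℝ, ∀ t : ℝ, 0 < t → ‖J t‖ ≤ C := by
  classical
  haveI : SecondCountableTopologyEither ℝ (X →L[ℂ] X) := ⟨Or.inl inferInstance⟩
  have hM : 0 ≤ M := by
    have h1 := hRb b (by rw [abs_of_pos hb])
    rw [abs_of_pos hb] at h1
    have h2 : 0 ≤ M / b := le_trans (norm_nonneg _) h1
    have h3 := mul_nonneg h2 hb.le
    rwa [div_mul_cancel₀ M hb.ne'] at h3
  set V : ℝ → X →L[ℂ] X := fun l => (-Complex.I) • ((R l).comp (R l)) with hVdef
  have hRn := aux_norm D A hb hM R hR hRb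
  have hRd : ∀ s, b ≤ s → HasDerivWithinAt R (V s) (Set.Ici b) s :=
    aux_hasDeriv D A hb hM R hR hRb
  have hRc : ContinuousOn R (Set.Ici b) := aux_contOn D A hb hM R hR hRb
  have hVc : ContinuousOn V (Set.Ici b) := fun x hx => ((hRc.clm_comp hRc) x hx).const_smul (-Complex.I)
  have hVn : ∀ l, b ≤ l → ‖V l‖ ≤ M ^ 2 / l ^ 2 := by
    intro l hl
    have hl0 : 0 < l := lt_of_lt_of_le hb hl
    calc ‖V l‖ ≤ ‖-Complex.I‖ * ‖(R l).comp (R l)‖ := ((R l).comp (R l)).opNorm_smul_le _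
      _ = ‖(R l).comp (R l)‖ := by rw [norm_neg, Complex.norm_I, one_mul]
      _ ≤ (M / l) * (M / l) := ((R l).opNorm_comp_le (R l)).trans
          (mul_le_mul (hRn l hl) (hRn l hl) (norm_nonneg _) (by positivity))
      _ = M ^ 2 / l ^ 2 := by field_simp
  have hcontSinR : ∀ t : ℝ, ContinuousOn (fun l => Real.sin (l * t) • R l) (Set.Ici b) :=
    fun t => ((Real.continuous_sin.comp (continuous_id.mul continuous_const)).continuousOn).smul hRc
  have hcontCosV : ∀ t : ℝ, ContinuousOn (fun l => (Real.cos (l * t) / t) • V l) (Set.Ici b) :=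
    fun t => (((Real.continuous_cos.comp (continuous_id.mul continuous_const)).div_const
      t).continuousOn).smul hVc
  have hIccSub : ∀ a c : ℝ, b ≤ a → Set.Icc a c ⊆ Set.Ici b := fun a c hba x hx => hba.trans hx.1
  have hII1 : ∀ t a c : ℝ, b ≤ a → a ≤ c →
      IntervalIntegrable (fun l => Real.sin (l * t) • R l) volume a c := by
    intro t a c hba hac
    exact ((hcontSinR t).mono
      (by rw [Set.uIcc_of_le hac]; exact hIccSub a c hba)).intervalIntegrable
  have hII2 : ∀ t a c : ℝ, b ≤ a → a ≤ c →
      IntervalIntegrable (fun l => (Real.cos (l * t) / t) • V l) volume a c := by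
    intro t a c hba hac
    exact ((hcontCosV t).mono
      (by rw [Set.uIcc_of_le hac]; exact hIccSub a c hba)).intervalIntegrable
  -- integration by parts
  have ibp : ∀ t : ℝ, 0 < t → ∀ a c : ℝ, b ≤ a → a ≤ c →
      ∫ l in a..c, Real.sin (l * t) • R l
        = (-Real.cos (c * t) / t) • R c - (-Real.cos (a * t) / t) • R a
          + ∫ l in a..c, (Real.cos (l * t) / t) • V l := by
    intro t ht a c hba hac
    have hu : ∀ l : ℝ, HasDerivAt (fun y : ℝ => -Real.cos (y * t) / t) (Real.sin (l * t)) l := by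
      intro l
      have h1 : HasDerivAt (fun y : ℝ => y * t) t l := hasDerivAt_mul_const t
      have h2 : HasDerivAt (fun y : ℝ => Real.cos (y * t)) (-Real.sin (l * t) * t) l :=
        h1.cos
      have h3 := (h2.neg).div_const t
      exact h3.congr_deriv (by rw [neg_mul, neg_neg, mul_div_cancel_right₀ _ ht.ne'])
    have hFd : ∀ l, b ≤ l → HasDerivWithinAt (fun y => (-Real.cos (y * t) / t) • R y)
        (Real.sin (l * t) • R l - (Real.cos (l * t) / t) • V l) (Set.Ici b) l := by
      intro l hl
      have h := ((hu l).hasDerivWithinAt).smul (hRd l hl)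
      exact h.congr_deriv (by rw [neg_div, neg_smul]; abel)
    have hsub : ∫ l in a..c, (Real.sin (l * t) • R l - (Real.cos (l * t) / t) • V l)
        = (-Real.cos (c * t) / t) • R c - (-Real.cos (a * t) / t) • R a := by
      apply intervalIntegral.integral_eq_sub_of_hasDeriv_right_of_le hac
      · exact ((((Real.continuous_cos.comp (continuous_id.mul continuous_const)).neg).div_const
          t).continuousOn).smul (hRc.mono (hIccSub a c hba))
      · intro x hx
        exact (hFd x (hba.trans hx.1.le)).mono (fun y hy => (hba.trans hx.1.le).trans hy.le)
      · exact (hII1 t a c hba hac).sub (hII2 t a c hba hac)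
    rw [intervalIntegral.integral_sub (hII1 t a c hba hac) (hII2 t a c hba hac)] at hsub
    exact sub_eq_iff_eq_add.mp hsub
  -- pointwise bound for the tail integrand
  have hbd : ∀ t : ℝ, 0 < t → ∀ l : ℝ, b ≤ l →
      ‖(Real.cos (l * t) / t) • V l‖ ≤ (M ^ 2 / t) * l ^ (-2 : ℝ) := by
    intro t ht l hl
    have hl0 : 0 < l := lt_of_lt_of_le hb hl
    have hr : l ^ (-2 : ℝ) = (l ^ 2)⁻¹ := by
      rw [show (-2 : ℝ) = -((2 : ℕ) : ℝ) by norm_num, Real.rpow_neg hl0.le, Real.rpow_natCast]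
    have h1 : ‖(Real.cos (l * t) / t) • V l‖ ≤ ‖Real.cos (l * t) / t‖ * ‖V l‖ :=
      (V l).opNorm_smul_le _
    have h2 : ‖Real.cos (l * t) / t‖ ≤ 1 / t := by
      rw [Real.norm_eq_abs, abs_div, abs_of_pos ht]
      gcongr
      exact Real.abs_cos_le_one _
    exact le_trans h1 (by
      calc ‖Real.cos (l * t) / t‖ * ‖V l‖ ≤ (1 / t) * (M ^ 2 / l ^ 2) :=
          mul_le_mul h2 (hVn l hl) (norm_nonneg _) (by positivity)
        _ = (M ^ 2 / t) * l ^ (-2 : ℝ) := by rw [hr]; field_simp)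
  have gInt : ∀ a : ℝ, 0 < a → IntegrableOn (fun l : ℝ => l ^ (-2 : ℝ)) (Set.Ioi a) :=
    fun a ha => integrableOn_Ioi_rpow_of_lt (by norm_num) ha
  have gVal : ∀ a : ℝ, 0 < a → ∫ l in Set.Ioi a, l ^ (-2 : ℝ) = a⁻¹ := by
    intro a ha
    rw [integral_Ioi_rpow_of_lt (by norm_num) ha]
    norm_num [Real.rpow_neg_one]
  have hIoi : ∀ t : ℝ, 0 < t → ∀ a : ℝ, b ≤ a →
      IntegrableOn (fun l => (Real.cos (l * t) / t) • V l) (Set.Ioi a) volume := by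
    intro t ht a hba
    have ha0 : 0 < a := lt_of_lt_of_le hb hba
    apply Integrable.mono' ((gInt a ha0).const_mul (M ^ 2 / t))
    · exact ((hcontCosV t).mono
        (fun x (hx : a < x) => le_of_lt (lt_of_le_of_lt hba hx))).aestronglyMeasurable
        measurableSet_Ioi
    · rw [ae_restrict_iff' measurableSet_Ioi]
      exact ae_of_all _ fun l hl => hbd t ht l (hba.trans (le_of_lt hl))
  have hTail : ∀ t : ℝ, 0 < t → ∀ a c : ℝ, b ≤ a → a ≤ c →
      ‖∫ l in a..c, (Real.cos (l * t) / t) • V l‖ ≤ M ^ 2 / t * a⁻¹ := by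
    intro t ht a c hba hac
    have ha0 : 0 < a := lt_of_lt_of_le hb hba
    rw [intervalIntegral.integral_of_le hac]
    calc ‖∫ l in Set.Ioc a c, (Real.cos (l * t) / t) • V l‖
        ≤ ∫ l in Set.Ioc a c, ‖(Real.cos (l * t) / t) • V l‖ := norm_integral_le_integral_norm _
      _ ≤ ∫ l in Set.Ioi a, ‖(Real.cos (l * t) / t) • V l‖ :=
          setIntegral_mono_set (hIoi t ht a hba).norm
            (ae_of_all _ fun l => norm_nonneg _)
            (HasSubset.Subset.eventuallyLE Set.Ioc_subset_Ioi_self)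
      _ ≤ ∫ l in Set.Ioi a, (M ^ 2 / t) * l ^ (-2 : ℝ) :=
          setIntegral_mono_on (hIoi t ht a hba).norm ((gInt a ha0).const_mul _)
            measurableSet_Ioi (fun l hl => hbd t ht l (hba.trans (le_of_lt hl)))
      _ = M ^ 2 / t * a⁻¹ := by rw [MeasureTheory.integral_const_mul, gVal a ha0]
  -- convergence
  have hJ : ∀ t : ℝ, 0 < t →
      Tendsto (fun c : ℝ => ∫ l in b..c, Real.sin (l * t) • R l) atTop
        (𝓝 ((Real.cos (b * t) / t) • R b +
          ∫ l in Set.Ioi b, (Real.cos (l * t) / t) • V l)) := by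
    intro t ht
    have hFb : Tendsto (fun c : ℝ => (-Real.cos (c * t) / t) • R c) atTop (𝓝 0) := by
      have hgl : Tendsto (fun c : ℝ => (M / t) * c⁻¹) atTop (𝓝 0) := by
        simpa using tendsto_inv_atTop_zero.const_mul (M / t)
      apply squeeze_zero_norm' ?_ hgl
      · filter_upwards [eventually_ge_atTop b] with c hc
        have hc0 : 0 < c := lt_of_lt_of_le hb hc
        calc ‖(-Real.cos (c * t) / t) • R c‖ ≤ ‖-Real.cos (c * t) / t‖ * ‖R c‖ :=
            (R c).opNorm_smul_le _
          _ ≤ (1 / t) * (M / c) := by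
              apply mul_le_mul _ (hRn c hc) (norm_nonneg _) (by positivity)
              rw [Real.norm_eq_abs, abs_div, abs_of_pos ht, abs_neg]
              gcongr
              exact Real.abs_cos_le_one _
          _ = (M / t) * c⁻¹ := by field_simp
    have hInt := MeasureTheory.intervalIntegral_tendsto_integral_Ioi b
      (hIoi t ht b le_rfl) tendsto_id
    have heq : ∀ᶠ c in atTop,
        ((-Real.cos (c * t) / t) • R c - (-Real.cos (b * t) / t) • R b)
          + (∫ l in b..c, (Real.cos (l * t) / t) • V l)
        = ∫ l in b..c, Real.sin (l * t) • R l := by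
      filter_upwards [eventually_ge_atTop b] with c hc
      exact (ibp t ht b c le_rfl hc).symm
    have h2 := Tendsto.congr' heq ((hFb.sub tendsto_const_nhds).add hInt)
    have hval : (Real.cos (b * t) / t) • R b + ∫ l in Set.Ioi b, (Real.cos (l * t) / t) • V l
        = (0 : X →L[ℂ] X) - (-Real.cos (b * t) / t) • R b
          + ∫ l in Set.Ioi b, (Real.cos (l * t) / t) • V l := by
      rw [neg_div, neg_smul, zero_sub, neg_neg]
    rw [hval]
    exact h2
  -- uniform bound
  have hGbound : ∀ t : ℝ, 0 < t → ∀ c : ℝ, max b (1 / t) ≤ c →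
      ‖∫ l in b..c, Real.sin (l * t) • R l‖ ≤ 3 * M + M ^ 2 := by
    intro t ht c hc
    set a := max b (1 / t) with ha
    have hba : b ≤ a := le_max_left _ _
    have hta : 1 / t ≤ a := le_max_right _ _
    have ha0 : 0 < a := lt_of_lt_of_le hb hba
    have hac : a ≤ c := hc
    have hta1 : 1 ≤ t * a := by
      rw [← div_le_iff₀' ht]
      exact hta
    have hsplit : (∫ l in b..c, Real.sin (l * t) • R l)
        = (∫ l in b..a, Real.sin (l * t) • R l) + ∫ l in a..c, Real.sin (l * t) • R l :=
      (intervalIntegral.integral_add_adjacent_intervals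
        (hII1 t b a le_rfl hba) (hII1 t a c hba hac)).symm
    have h1 : ‖∫ l in b..a, Real.sin (l * t) • R l‖ ≤ M := by
      have hpt : ∀ x ∈ Set.uIoc b a, ‖Real.sin (x * t) • R x‖ ≤ t * M := by
        intro x hx
        rw [Set.uIoc_of_le hba] at hx
        have hx0 : 0 < x := lt_trans hb hx.1
        calc ‖Real.sin (x * t) • R x‖ ≤ ‖Real.sin (x * t)‖ * ‖R x‖ := (R x).opNorm_smul_le _
          _ ≤ (x * t) * (M / x) := by
              apply mul_le_mul _ (hRn x (le_of_lt hx.1)) (norm_nonneg _) (by positivity)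
              rw [Real.norm_eq_abs]
              calc |Real.sin (x * t)| ≤ |x * t| := Real.abs_sin_le_abs
                _ = x * t := abs_of_pos (by positivity)
          _ = t * M := by field_simp
      have hnorm := intervalIntegral.norm_integral_le_of_norm_le_const hpt
      have habs : |a - b| ≤ 1 / t := by
        rw [abs_of_nonneg (by linarith)]
        have h1t : (0:ℝ) < 1 / t := one_div_pos.mpr ht
        have : a ≤ 1 / t + b := max_le (by linarith) (by linarith)
        linarith
      calc ‖∫ l in b..a, Real.sin (l * t) • R l‖ ≤ t * M * |a - b| := hnorm
        _ ≤ t * M * (1 / t) := mul_le_mul_of_nonneg_left habs (mul_nonneg ht.le hM)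
        _ = M := by field_simp
    have hF : ∀ x : ℝ, a ≤ x → ‖(-Real.cos (x * t) / t) • R x‖ ≤ M := by
      intro x hx
      have hx0 : 0 < x := lt_of_lt_of_le ha0 hx
      have htx : 1 ≤ t * x := le_trans hta1 (by nlinarith)
      calc ‖(-Real.cos (x * t) / t) • R x‖ ≤ ‖-Real.cos (x * t) / t‖ * ‖R x‖ :=
          (R x).opNorm_smul_le _
        _ ≤ (1 / t) * (M / x) := by
            apply mul_le_mul _ (hRn x (hba.trans hx)) (norm_nonneg _) (by positivity)
            rw [Real.norm_eq_abs, abs_div, abs_of_pos ht, abs_neg]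
            gcongr
            exact Real.abs_cos_le_one _
        _ = M / (t * x) := by field_simp
        _ ≤ M / 1 := div_le_div_of_nonneg_left hM one_pos htx
        _ = M := div_one M
    have h2 : ‖∫ l in a..c, Real.sin (l * t) • R l‖ ≤ 2 * M + M ^ 2 := by
      rw [ibp t ht a c hba hac]
      have ht1 : ‖∫ l in a..c, (Real.cos (l * t) / t) • V l‖ ≤ M ^ 2 := by
        have := hTail t ht a c hba hac
        have hainv : a⁻¹ ≤ t := by
          have h5 := inv_anti₀ (by positivity : (0:ℝ) < 1 / t) hta
          rwa [one_div, inv_inv] at h5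
        calc ‖∫ l in a..c, (Real.cos (l * t) / t) • V l‖ ≤ M ^ 2 / t * a⁻¹ := this
          _ ≤ M ^ 2 / t * t := mul_le_mul_of_nonneg_left hainv (by positivity)
          _ = M ^ 2 := by field_simp
      calc ‖(-Real.cos (c * t) / t) • R c - (-Real.cos (a * t) / t) • R a
            + ∫ l in a..c, (Real.cos (l * t) / t) • V l‖
          ≤ ‖(-Real.cos (c * t) / t) • R c - (-Real.cos (a * t) / t) • R a‖
            + ‖∫ l in a..c, (Real.cos (l * t) / t) • V l‖ := norm_add_le _ _
        _ ≤ (‖(-Real.cos (c * t) / t) • R c‖ + ‖(-Real.cos (a * t) / t) • R a‖)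
            + ‖∫ l in a..c, (Real.cos (l * t) / t) • V l‖ := by
            gcongr
            exact norm_sub_le _ _
        _ ≤ (M + M) + M ^ 2 :=
            add_le_add (add_le_add (hF c hac) (hF a le_rfl)) ht1
        _ = 2 * M + M ^ 2 := by ring
    rw [hsplit]
    calc ‖(∫ l in b..a, Real.sin (l * t) • R l) + ∫ l in a..c, Real.sin (l * t) • R l‖
        ≤ ‖∫ l in b..a, Real.sin (l * t) • R l‖ + ‖∫ l in a..c, Real.sin (l * t) • R l‖ :=
          norm_add_le _ _
      _ ≤ M + (2 * M + M ^ 2) := add_le_add h1 h2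
      _ = 3 * M + M ^ 2 := by ring
  refine ⟨fun t => if ht : 0 < t then (Real.cos (b * t) / t) • R b
      + ∫ l in Set.Ioi b, (Real.cos (l * t) / t) • V l else 0, ?_, ⟨3 * M + M ^ 2, ?_⟩⟩
  · intro t ht
    beta_reduce
    rw [dif_pos ht]
    exact hJ t ht
  · intro t ht
    beta_reduce
    rw [dif_pos ht]
    exact le_of_tendsto (hJ t ht).norm
      (eventually_atTop.2 ⟨max b (1 / t), fun c hc => hGbound t ht c hc⟩)

end
end

section
/- Let A generate a bounded holomorphic C₀-semigroup on X and let b > 0 with ‖R(iλ, A)‖ ≤ M/|λ| for |λ| ≥ b. Then for every t with 0 < t < π/(2b), the improper Riemann integral I(t) = ∫_b^∞ R(iλ, A) cos(λt) dλ exists and ‖I(t)‖ = O(|ln t|) as t → 0⁺. -/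
open MeasureTheory Filter Topology

noncomputable section

variable {X : Type*} [NormedAddCommGroup X] [NormedSpace ℂ X] [CompleteSpace X]

omit [CompleteSpace X] in
lemma resolvent_identity' {D : Submodule ℂ X} {A : D →ₗ[ℂ] X} {μ ν : ℂ}
    {R1 R2 : X →L[ℂ] X} (h1 : IsResolventOf D A μ R1) (h2 : IsResolventOf D A ν R2) :
    R2 = R1 + (μ - ν) • R1.comp R2 := by
  ext x
  obtain ⟨hm, he⟩ := h2.1 x
  have key := h1.2 ⟨R2 x, hm⟩
  have h3 : μ • R2 x - A ⟨R2 x, hm⟩ = (μ - ν) • R2 x + (ν • R2 x - A ⟨R2 x, hm⟩) := by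
    rw [sub_smul]; abel
  rw [he] at h3
  simp only [Submodule.coe_mk] at key
  rw [h3] at key
  simp only [map_add, _root_.map_smul] at key
  simp only [ContinuousLinearMap.add_apply, ContinuousLinearMap.coe_smul',
    Pi.smul_apply, ContinuousLinearMap.coe_comp', Function.comp_apply]
  calc R2 x = (μ - ν) • R1 (R2 x) + R1 x := key.symm
    _ = R1 x + (μ - ν) • R1 (R2 x) := by abel


set_option maxHeartbeats 1000000 in
set_option synthInstance.maxHeartbeats 400000 in
/-- Lemma 3.4(i): `I(t) = ∫_b^∞ R(iλ,A) cos(λt) dλ` exists as an improper Riemann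
integral for `0 < t < π/(2b)` and `‖I(t)‖ = O(|ln t|)` as `t → 0⁺`. -/
theorem cosine_resolvent_integral_exists_and_log_bound
    (T : ℝ → X →L[ℂ] X) (hT : IsC0Semigroup T) (hol : IsHolomorphicSG T)
    (hbdd : ∃ K : ℝ, ∀ t : ℝ, 0 ≤ t → ‖T t‖ ≤ K)
    (D : Submodule ℂ X) (A : D →ₗ[ℂ] X) (hA : IsGeneratorOf T D A)
    (b M : ℝ) (hb : 0 < b)
    (R : ℝ → X →L[ℂ] X)
    (hR : ∀ s : ℝ, b ≤ |s| → IsResolventOf D A (Complex.I * s) (R s))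
    (hRb : ∀ s : ℝ, b ≤ |s| → ‖R s‖ ≤ M / |s|) :
    ∃ I : ℝ → X →L[ℂ] X,
      (∀ t : ℝ, 0 < t → t < Real.pi / (2 * b) →
        Tendsto (fun c : ℝ => ∫ l in b..c, Real.cos (l * t) • R l) atTop (𝓝 (I t))) ∧
      (fun t : ℝ => ‖I t‖) =O[𝓝[>] (0 : ℝ)] fun t : ℝ => Real.log t := by

  have habs : ∀ l : ℝ, b ≤ l → b ≤ |l| := fun l hl => hl.trans (le_abs_self l)
  have hRnorm : ∀ l : ℝ, b ≤ l → ‖R l‖ ≤ M / l := by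
    intro l hl
    have h := hRb l (habs l hl)
    rwa [abs_of_pos (hb.trans_le hl)] at h
  have hM : 0 ≤ M := by
    have h1 : (0:ℝ) ≤ M / b := le_trans (norm_nonneg (R b)) (hRnorm b le_rfl)
    rcases div_nonneg_iff.mp h1 with ⟨h, _⟩ | ⟨_, h⟩
    · exact h
    · linarith
  have hRb' : ∀ l : ℝ, b ≤ l → ‖R l‖ ≤ M / b :=
    fun l hl => (hRnorm l hl).trans (div_le_div_of_nonneg_left hM hb hl)
  -- resolvent identity for our R
  have key : ∀ s l : ℝ, b ≤ s → b ≤ l →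
      R l = R s + (Complex.I * s - Complex.I * l) • (R s).comp (R l) :=
    fun s l hs hl => resolvent_identity' (hR s (habs s hs)) (hR l (habs l hl))
  have keysub : ∀ s l : ℝ, b ≤ s → b ≤ l →
      R l - R s = (Complex.I * s - Complex.I * l) • (R s).comp (R l) := by
    intro s l hs hl
    exact sub_eq_iff_eq_add'.mpr (key s l hs hl)
  have normc : ∀ s l : ℝ, ‖(Complex.I * s - Complex.I * l : ℂ)‖ = |l - s| := by
    intro s l
    rw [← mul_sub, norm_mul, Complex.norm_I, one_mul,
      show ((s:ℂ) - l) = ((s - l : ℝ) : ℂ) by push_cast; ring,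
      Complex.norm_real, Real.norm_eq_abs, abs_sub_comm]
  have hcompnorm : ∀ s l : ℝ, b ≤ s → b ≤ l → ‖(R s).comp (R l)‖ ≤ (M / b) * (M / b) := by
    intro s l hs hl
    calc ‖(R s).comp (R l)‖ ≤ ‖R s‖ * ‖R l‖ := ContinuousLinearMap.opNorm_comp_le _ _
      _ ≤ (M / b) * (M / b) :=
        mul_le_mul (hRb' s hs) (hRb' l hl) (norm_nonneg _) (div_nonneg hM hb.le)
  have hdiff : ∀ s l : ℝ, b ≤ s → b ≤ l →
      ‖R l - R s‖ ≤ |l - s| * ((M / b) * (M / b)) := by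
    intro s l hs hl
    rw [keysub s l hs hl]
    rw [norm_smul (Complex.I * (s:ℂ) - Complex.I * (l:ℂ)) ((R s).comp (R l)), normc]
    exact mul_le_mul_of_nonneg_left (hcompnorm s l hs hl) (abs_nonneg _)
  -- continuity of R on [b, ∞)
  have contR : ContinuousOn R (Set.Ici b) := by
    refine LipschitzOnWith.continuousOn
      (LipschitzOnWith.of_dist_le_mul (K := ⟨(M/b)*(M/b), by positivity⟩) ?_)
    intro x hx y hy
    rw [dist_eq_norm, dist_eq_norm, Real.norm_eq_abs]
    calc ‖R x - R y‖ ≤ |x - y| * ((M/b)*(M/b)) := hdiff y x hy hx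
      _ = (M/b)*(M/b) * |x - y| := by ring
  -- derivative of R
  have derivR : ∀ l : ℝ, b < l → HasDerivAt R (-Complex.I • ((R l).comp (R l))) l := by
    intro l hl
    rw [hasDerivAt_iff_tendsto_slope]
    have hmem : Set.Ici b ∈ 𝓝 l := Ici_mem_nhds hl
    have hcont : ContinuousAt R l := contR.continuousAt hmem
    have h1 : Tendsto (fun s => -Complex.I • ((R l).comp (R s)))
        (𝓝[≠] l) (𝓝 (-Complex.I • ((R l).comp (R l)))) := by
      apply Tendsto.mono_left _ nhdsWithin_le_nhds
      have hco : ContinuousOn (fun s => (R l).comp (R s)) (Set.Ici b) :=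
        ContinuousOn.clm_comp continuousOn_const contR
      exact ((hco.continuousAt hmem).const_smul (-Complex.I)).tendsto
    refine h1.congr' ?_
    filter_upwards [nhdsWithin_le_nhds hmem, self_mem_nhdsWithin] with s hs hsl
    have hsne : s ≠ l := hsl
    have h2 : ((s - l : ℝ) : ℂ) ≠ 0 := by exact_mod_cast sub_ne_zero.mpr hsne
    have hkey := keysub l s hl.le hs
    rw [slope_def_module, hkey, ← smul_assoc]
    congr 1
    rw [Complex.real_smul, Complex.ofReal_inv]
    push_cast [h2] at *
    field_simp
    ring
  -- continuity and bounds for R l ∘ R l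
  have contRR : ContinuousOn (fun l => (R l).comp (R l)) (Set.Ici b) :=
    ContinuousOn.clm_comp contR contR
  have hRRnorm : ∀ l : ℝ, b ≤ l → ‖(R l).comp (R l)‖ ≤ M^2 * l ^ (-2 : ℝ) := by
    intro l hl
    have hl0 : 0 < l := hb.trans_le hl
    have h6 : ‖(R l).comp (R l)‖ ≤ (M/l) * (M/l) :=
      (ContinuousLinearMap.opNorm_comp_le _ _).trans
        (mul_le_mul (hRnorm l hl) (hRnorm l hl) (norm_nonneg _) (div_nonneg hM hl0.le))
    have h7 : M^2 * l ^ (-2 : ℝ) = (M/l) * (M/l) := by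
      rw [Real.rpow_neg hl0.le, show (2:ℝ) = ((2:ℕ):ℝ) by norm_num, Real.rpow_natCast]
      field_simp
    rw [h7]; exact h6
  set f : ℝ → ℝ → (X →L[ℂ] X) := fun t l => (Real.sin (l * t) / t) • ((R l).comp (R l))
    with hf
  have hcontf : ∀ t : ℝ, ContinuousOn (f t) (Set.Ici b) := by
    intro t
    exact ContinuousOn.smul (Continuous.continuousOn
      (by fun_prop : Continuous fun l : ℝ => Real.sin (l * t) / t)) contRR
  have hnormf : ∀ t l : ℝ, t ≠ 0 → b ≤ l → ‖f t l‖ ≤ |t|⁻¹ * (M^2 * l ^ (-2:ℝ)) := by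
    intro t l ht hl
    rw [hf]
    rw [norm_smul (Real.sin (l * t) / t) ((R l).comp (R l))]
    have h8 : ‖Real.sin (l * t) / t‖ ≤ |t|⁻¹ := by
      rw [Real.norm_eq_abs, abs_div]
      rw [div_le_iff₀ (abs_pos.mpr ht)]
      rw [inv_mul_cancel₀ (abs_ne_zero.mpr ht)]
      exact Real.abs_sin_le_one _
    exact mul_le_mul h8 (hRRnorm l hl) (norm_nonneg _) (by positivity)
  have hintf : ∀ t : ℝ, t ≠ 0 → IntegrableOn (f t) (Set.Ioi b) := by
    intro t ht
    refine Integrable.mono' (g := fun l => |t|⁻¹ * (M^2 * l ^ (-2:ℝ))) ?_ ?_ ?_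
    · exact ((integrableOn_Ioi_rpow_of_lt (by norm_num) hb).const_mul (M^2)).const_mul _
    · exact ((hcontf t).mono Set.Ioi_subset_Ici_self).aestronglyMeasurable measurableSet_Ioi
    · filter_upwards [ae_restrict_mem measurableSet_Ioi] with l hl
      exact hnormf t l ht (le_of_lt hl)
  -- the candidate limit
  set Ifun : ℝ → (X →L[ℂ] X) := fun t =>
    (0 : X →L[ℂ] X) - (Real.sin (b * t) / t) • R b + Complex.I • ∫ l in Set.Ioi b, f t l
    with hIfun
  refine ⟨Ifun, ?_, ?_⟩
  · -- existence of improper integral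
    intro t ht1 _
    have ht0 : t ≠ 0 := ne_of_gt ht1
    have hstep : ∀ c : ℝ, b ≤ c → ∫ l in b..c, Real.cos (l * t) • R l
        = (Real.sin (c * t) / t) • R c - (Real.sin (b * t) / t) • R b
          + Complex.I • ∫ l in b..c, f t l := by
      intro c hc
      have hcontG : ContinuousOn (fun l => (Real.sin (l * t) / t) • R l) (Set.Icc b c) :=
        ContinuousOn.smul (Continuous.continuousOn
          (by fun_prop : Continuous fun l : ℝ => Real.sin (l * t) / t))
          (contR.mono Set.Icc_subset_Ici_self)
      have hderivG : ∀ l ∈ Set.Ioo b c,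
          HasDerivWithinAt (fun l => (Real.sin (l * t) / t) • R l)
          (Real.cos (l * t) • R l - Complex.I • f t l) (Set.Ioi l) l := by
        intro l hl
        have h0 : HasDerivAt (fun l : ℝ => l * t) t l := by
          simpa using (hasDerivAt_id l).mul_const t
        have h2 := (Real.hasDerivAt_sin (l * t)).comp l h0
        have h3 := h2.div_const t
        have h1 : HasDerivAt (fun l : ℝ => Real.sin (l * t) / t) (Real.cos (l * t)) l := by
          have : Real.cos (l * t) * t / t = Real.cos (l * t) := by
            field_simp
          simpa [Function.comp, this] using h3
        have h4 := h1.smul (derivR l hl.1)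
        have heq : Real.cos (l * t) • R l - Complex.I • f t l
            = (Real.sin (l * t) / t) • (-Complex.I • ((R l).comp (R l)))
              + Real.cos (l * t) • R l := by
          rw [hf]
          rw [smul_comm (Real.sin (l * t) / t) (-Complex.I) ((R l).comp (R l))]
          simp only [neg_smul]
          rw [smul_comm Complex.I (Real.sin (l * t) / t) ((R l).comp (R l))]
          abel
        rw [heq]
        exact h4.hasDerivWithinAt
      have hi1 : IntervalIntegrable (fun l => Real.cos (l * t) • R l) volume b c := by
        apply ContinuousOn.intervalIntegrable
        rw [Set.uIcc_of_le hc]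
        exact ContinuousOn.smul (Continuous.continuousOn
          (by fun_prop : Continuous fun l : ℝ => Real.cos (l * t)))
          (contR.mono Set.Icc_subset_Ici_self)
      have hi2 : IntervalIntegrable (fun l => Complex.I • f t l) volume b c := by
        apply ContinuousOn.intervalIntegrable
        rw [Set.uIcc_of_le hc]
        exact (((hcontf t).mono Set.Icc_subset_Ici_self).const_smul Complex.I)
      have hiG' : IntervalIntegrable
          (fun l => Real.cos (l * t) • R l - Complex.I • f t l) volume b c := hi1.sub hi2
      have hFTC := intervalIntegral.integral_eq_sub_of_hasDeriv_right_of_le hc hcontG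
        hderivG hiG'
      rw [intervalIntegral.integral_sub hi1 hi2, intervalIntegral.integral_smul] at hFTC
      rw [sub_eq_iff_eq_add] at hFTC
      rw [hFTC]
    have lim1 : Tendsto (fun c => (Real.sin (c * t) / t) • R c) atTop
        (𝓝 (0 : X →L[ℂ] X)) := by
      apply squeeze_zero_norm' (a := fun c => t⁻¹ * (M / c))
      · filter_upwards [eventually_ge_atTop b] with c hc
        rw [norm_smul (Real.sin (c * t) / t) (R c)]
        have h5 : ‖Real.sin (c * t) / t‖ ≤ t⁻¹ := by
          rw [Real.norm_eq_abs, abs_div, abs_of_pos ht1, div_le_iff₀ ht1,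
            inv_mul_cancel₀ ht0]
          exact Real.abs_sin_le_one _
        exact mul_le_mul h5 (hRnorm c hc) (norm_nonneg _) (by positivity)
      · have h9 : Tendsto (fun c : ℝ => M / c) atTop (𝓝 0) :=
          tendsto_const_nhds.div_atTop tendsto_id
        simpa using h9.const_mul t⁻¹
    have lim2 : Tendsto (fun c => ∫ l in b..c, f t l) atTop
        (𝓝 (∫ l in Set.Ioi b, f t l)) :=
      intervalIntegral_tendsto_integral_Ioi b (hintf t ht0) tendsto_id
    have hcomb := (lim1.sub (tendsto_const_nhds (x := (Real.sin (b * t) / t) • R b))).add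
      (lim2.const_smul Complex.I)
    rw [hIfun]
    refine Tendsto.congr' ?_ hcomb
    filter_upwards [eventually_ge_atTop b] with c hc
    exact (hstep c hc).symm
  · -- the logarithmic bound
    rw [Asymptotics.isBigO_iff]
    refine ⟨M + M^2 + M^2 * |Real.log b| + M^2, ?_⟩
    have ht₀pos : 0 < min (1/b) (Real.exp (-1)) := lt_min (by positivity) (Real.exp_pos _)
    filter_upwards [Ioo_mem_nhdsGT_of_mem
      (Set.mem_Ico.mpr ⟨le_refl (0:ℝ), ht₀pos⟩)] with t ht
    obtain ⟨ht1, ht2⟩ := ht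
    have ht0 : t ≠ 0 := ne_of_gt ht1
    have htb : t < 1/b := lt_of_lt_of_le ht2 (min_le_left _ _)
    have hte : t < Real.exp (-1) := lt_of_lt_of_le ht2 (min_le_right _ _)
    have hlogt : Real.log t ≤ -1 := by
      have h := Real.log_lt_log ht1 hte
      rw [Real.log_exp] at h
      exact h.le
    have h1le : 1 ≤ |Real.log t| := by
      rw [abs_of_neg (by linarith : Real.log t < 0)]; linarith
    have hbt : b < t⁻¹ := by
      have h' : t * b < 1 := (lt_div_iff₀ hb).mp htb
      rw [show (t⁻¹ : ℝ) = 1/t by rw [one_div], lt_div_iff₀ ht1]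
      linarith [mul_comm t b]
    -- split the integral
    have hi1 : IntegrableOn (f t) (Set.Ioc b t⁻¹) :=
      (hintf t ht0).mono_set Set.Ioc_subset_Ioi_self
    have hi2 : IntegrableOn (f t) (Set.Ioi t⁻¹) :=
      (hintf t ht0).mono_set (Set.Ioi_subset_Ioi hbt.le)
    have hsplit : ∫ l in Set.Ioi b, f t l
        = (∫ l in Set.Ioc b t⁻¹, f t l) + ∫ l in Set.Ioi t⁻¹, f t l := by
      rw [← setIntegral_union (Set.Ioc_disjoint_Ioi le_rfl) measurableSet_Ioi hi1 hi2,
        Set.Ioc_union_Ioi_eq_Ioi hbt.le]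
    -- first term
    have hterm1 : ‖(0:X →L[ℂ] X) - (Real.sin (b * t) / t) • R b‖ ≤ M := by
      rw [zero_sub, norm_neg, norm_smul (Real.sin (b * t) / t) (R b),
        Real.norm_eq_abs, abs_div, abs_of_pos ht1]
      have hsin : |Real.sin (b * t)| ≤ b * t :=
        (Real.abs_sin_le_abs (x := b * t)).trans_eq (abs_of_pos (by positivity))
      calc |Real.sin (b * t)| / t * ‖R b‖ ≤ (b * t) / t * (M / b) := by
            apply mul_le_mul _ (hRnorm b le_rfl) (norm_nonneg _) (by positivity)
            gcongr
        _ = M := by field_simp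
    -- middle range bound
    have hIoc : ‖∫ l in Set.Ioc b t⁻¹, f t l‖ ≤ M^2 * (|Real.log t| + |Real.log b|) := by
      have hgint : IntegrableOn (fun l : ℝ => M^2 * l⁻¹) (Set.Ioc b t⁻¹) := by
        apply (ContinuousOn.integrableOn_Icc ?_).mono_set Set.Ioc_subset_Icc_self
        exact continuousOn_const.mul (continuousOn_id.inv₀
          (fun x hx => (hb.trans_le hx.1).ne'))
      have hle : ‖∫ l in Set.Ioc b t⁻¹, f t l‖ ≤ ∫ l in Set.Ioc b t⁻¹, M^2 * l⁻¹ := by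
        apply norm_integral_le_of_norm_le hgint
        filter_upwards [ae_restrict_mem measurableSet_Ioc] with l hl
        have hl0 : 0 < l := hb.trans hl.1
        rw [hf, norm_smul (Real.sin (l * t) / t) ((R l).comp (R l)),
          Real.norm_eq_abs, abs_div, abs_of_pos ht1]
        have hsin : |Real.sin (l * t)| ≤ l * t :=
          (Real.abs_sin_le_abs (x := l * t)).trans_eq (abs_of_pos (by positivity))
        calc |Real.sin (l * t)| / t * ‖(R l).comp (R l)‖
            ≤ (l * t) / t * (M^2 * l ^ (-2:ℝ)) := by
              apply mul_le_mul _ (hRRnorm l hl.1.le) (norm_nonneg _) (by positivity)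
              gcongr
          _ = M^2 * l⁻¹ := by
              rw [mul_div_assoc, div_self ht0, mul_one, Real.rpow_neg hl0.le,
                show (2:ℝ) = ((2:ℕ):ℝ) by norm_num, Real.rpow_natCast]
              field_simp
      have hval : ∫ l in Set.Ioc b t⁻¹, (M^2 * l⁻¹ : ℝ) = M^2 * Real.log (t⁻¹ / b) := by
        rw [← intervalIntegral.integral_of_le hbt.le, intervalIntegral.integral_const_mul,
          integral_inv (Set.notMem_uIcc_of_lt hb (inv_pos.mpr ht1))]
      rw [hval] at hle
      refine hle.trans ?_
      have hlog : Real.log (t⁻¹ / b) = -Real.log t - Real.log b := by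
        rw [Real.log_div (inv_ne_zero ht0) hb.ne', Real.log_inv]
      rw [hlog]
      apply mul_le_mul_of_nonneg_left _ (by positivity : (0:ℝ) ≤ M^2)
      have := neg_le_abs (Real.log t)
      have := neg_le_abs (Real.log b)
      linarith
    -- tail bound
    have hIoi : ‖∫ l in Set.Ioi t⁻¹, f t l‖ ≤ M^2 := by
      have hle : ‖∫ l in Set.Ioi t⁻¹, f t l‖
          ≤ ∫ l in Set.Ioi t⁻¹, |t|⁻¹ * (M^2 * l ^ (-2:ℝ)) := by
        apply norm_integral_le_of_norm_le
        · exact ((integrableOn_Ioi_rpow_of_lt (by norm_num)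
            (inv_pos.mpr ht1)).const_mul (M^2)).const_mul _
        · filter_upwards [ae_restrict_mem measurableSet_Ioi] with l hl
          exact hnormf t l ht0 (hbt.le.trans hl.le)
      refine hle.trans ?_
      rw [integral_const_mul, integral_const_mul,
        integral_Ioi_rpow_of_lt (by norm_num) (inv_pos.mpr ht1), abs_of_pos ht1]
      rw [show (-2 : ℝ) + 1 = -1 by norm_num, Real.rpow_neg_one, inv_inv]
      apply le_of_eq
      field_simp
    -- assemble
    have hnormI : ‖Ifun t‖ ≤ M + (M^2 * (|Real.log t| + |Real.log b|) + M^2) := by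
      rw [hIfun]
      refine (norm_add_le _ _).trans (add_le_add hterm1 ?_)
      rw [norm_smul Complex.I (∫ l in Set.Ioi b, f t l), Complex.norm_I, one_mul, hsplit]
      exact (norm_add_le _ _).trans (add_le_add hIoc hIoi)
    rw [Real.norm_eq_abs, Real.norm_eq_abs, abs_of_nonneg (norm_nonneg _)]
    have p1 : 0 ≤ M * (|Real.log t| - 1) := mul_nonneg hM (by linarith)
    have p2 : 0 ≤ M^2 * (|Real.log t| - 1) := mul_nonneg (by positivity) (by linarith)
    have p3 : 0 ≤ (M^2 * |Real.log b|) * (|Real.log t| - 1) :=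
      mul_nonneg (mul_nonneg (by positivity) (abs_nonneg _)) (by linarith)
    nlinarith [hnormI]

end
end

section
/- Let F ⊆ L¹_loc(ℝ, X) be a linear subspace that is closed under uniform limits of bounded uniformly continuous members, translation invariant, and closed under composition with bounded operators (B∘φ ∈ F for B ∈ L(X), φ ∈ F ∩ C_ub). If φ ∈ L∞(ℝ, X) satisfies M_h φ ∈ F for every h > 0 (where M_h φ(t) = (1/h)∫₀^h φ(t+s) ds), and F ∈ L¹(ℝ, L(X)), then F * φ ∈ F ∩ C_ub(ℝ, X). -/
open MeasureTheory Filter Topology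

noncomputable section

variable {X : Type*} [NormedAddCommGroup X] [NormedSpace ℂ X] [CompleteSpace X]

def opConv (F : ℝ → X →L[ℂ] X) (φ : ℝ → X) (t : ℝ) : X := ∫ s, F s (φ (t - s))

/-- Bounded and uniformly continuous. -/
def BddUC (u : ℝ → X) : Prop := (∃ C : ℝ, ∀ t : ℝ, ‖u t‖ ≤ C) ∧ UniformContinuous u

/-- The mean `M_h φ (t) = (1/h) ∫₀^h φ(t+s) ds`. -/
def meanM (h : ℝ) (φ : ℝ → X) (t : ℝ) : X := h⁻¹ • ∫ s in (0:ℝ)..h, φ (t + s)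


section AuxLemmas
set_option linter.unusedSectionVars false
variable {φ : ℝ → X} {C : ℝ} {G G' : ℝ → X →L[ℂ] X}

lemma phi_aemeas_comp (hm : AEStronglyMeasurable φ (volume : Measure ℝ)) (t : ℝ) :
    AEStronglyMeasurable (fun s => φ (t - s)) (volume : Measure ℝ) :=
  hm.comp_quasiMeasurePreserving
    (Measure.measurePreserving_sub_left volume t).quasiMeasurePreserving

lemma phi_ae_bound (hC : ∀ᵐ u : ℝ, ‖φ u‖ ≤ C) (t : ℝ) : ∀ᵐ s : ℝ, ‖φ (t - s)‖ ≤ C :=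
  (Measure.measurePreserving_sub_left volume t).quasiMeasurePreserving.ae hC

lemma integrand_integrable (hm : AEStronglyMeasurable φ (volume : Measure ℝ))
    (hC : ∀ᵐ u : ℝ, ‖φ u‖ ≤ C) (hG : Integrable G) (t : ℝ) :
    Integrable (fun s => G s (φ (t - s))) := by
  have hms : AEStronglyMeasurable (fun s => G s (φ (t - s))) (volume : Measure ℝ) := by
    have := ContinuousLinearMap.aestronglyMeasurable_comp₂
      (ContinuousLinearMap.id ℂ (X →L[ℂ] X)) hG.1 (phi_aemeas_comp hm t)
    simpa using this
  refine (hG.norm.mul_const C).mono' hms ?_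
  filter_upwards [phi_ae_bound hC t] with s hs
  exact le_trans ((G s).le_opNorm _) (mul_le_mul_of_nonneg_left hs (norm_nonneg _))

lemma opConv_norm_le (hm : AEStronglyMeasurable φ (volume : Measure ℝ))
    (hC : ∀ᵐ u : ℝ, ‖φ u‖ ≤ C) (hG : Integrable G) (t : ℝ) :
    ‖∫ s, G s (φ (t - s))‖ ≤ (∫ s, ‖G s‖) * C := by
  rw [← integral_mul_const]
  refine norm_integral_le_of_norm_le (hG.norm.mul_const C) ?_
  filter_upwards [phi_ae_bound hC t] with s hs
  exact le_trans ((G s).le_opNorm _) (mul_le_mul_of_nonneg_left hs (norm_nonneg _))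

lemma opConv_sub_norm_le (hm : AEStronglyMeasurable φ (volume : Measure ℝ))
    (hC : ∀ᵐ u : ℝ, ‖φ u‖ ≤ C) (hG : Integrable G) (hG' : Integrable G') (t : ℝ) :
    ‖(∫ s, G s (φ (t - s))) - ∫ s, G' s (φ (t - s))‖ ≤ (∫ s, ‖G s - G' s‖) * C := by
  have h1 : (∫ s, G s (φ (t - s))) - ∫ s, G' s (φ (t - s))
      = ∫ s, (G s - G' s) (φ (t - s)) := by
    rw [← integral_sub (integrand_integrable hm hC hG t) (integrand_integrable hm hC hG' t)]
    simp [ContinuousLinearMap.sub_apply]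
  rw [h1]
  exact opConv_norm_le hm hC (hG.sub hG') t

lemma phi_intervalIntegrable (hm : AEStronglyMeasurable φ (volume : Measure ℝ))
    (hC : ∀ᵐ u : ℝ, ‖φ u‖ ≤ C) (a b : ℝ) : IntervalIntegrable φ volume a b := by
  constructor <;>
  · refine Integrable.mono' (g := fun _ => C)
      (integrableOn_const measure_Ioc_lt_top.ne) hm.restrict ?_
    exact ae_restrict_of_ae hC

lemma meanM_eq (h t : ℝ) : meanM h φ t = h⁻¹ • ∫ u in t..(t + h), φ u := by
  rw [meanM]
  congr 1
  simpa using intervalIntegral.integral_comp_add_left (a := (0:ℝ)) (b := h) φ t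

lemma meanM_norm_le (hm : AEStronglyMeasurable φ (volume : Measure ℝ))
    (hC : ∀ᵐ u : ℝ, ‖φ u‖ ≤ C) {h : ℝ} (hh : 0 < h) (t : ℝ) : ‖meanM h φ t‖ ≤ C := by
  have h1 : ‖∫ u in t..(t + h), φ u‖ ≤ C * |t + h - t| := by
    refine intervalIntegral.norm_integral_le_of_norm_le_const_ae ?_
    filter_upwards [hC] with u hu _
    exact hu
  rw [meanM_eq, norm_smul, norm_inv, Real.norm_eq_abs, abs_of_pos hh]
  calc h⁻¹ * ‖∫ u in t..(t + h), φ u‖ ≤ h⁻¹ * (C * h) := by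
        rw [mul_le_mul_iff_right₀ (inv_pos.2 hh)]
        simpa [abs_of_pos hh] using h1
    _ = C := by field_simp

lemma meanM_uc (hm : AEStronglyMeasurable φ (volume : Measure ℝ))
    (hC : ∀ᵐ u : ℝ, ‖φ u‖ ≤ C) (hC0 : 0 ≤ C) {h : ℝ} (hh : 0 < h) :
    UniformContinuous (meanM h φ) := by
  have key : ∀ t t' : ℝ, ‖meanM h φ t - meanM h φ t'‖ ≤ h⁻¹ * (2 * C) * |t - t'| := by
    intro t t'
    have hii : ∀ a b : ℝ, IntervalIntegrable φ volume a b := phi_intervalIntegrable hm hC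
    have e1 : (∫ u in t'..(t' + h), φ u)
        = (∫ u in t'..t, φ u) + (∫ u in t..(t + h), φ u) + ∫ u in (t + h)..(t' + h), φ u := by
      rw [intervalIntegral.integral_add_adjacent_intervals (hii t' t) (hii t (t+h)),
        intervalIntegral.integral_add_adjacent_intervals ((hii t' t).trans (hii t (t+h)))
        (hii (t+h) (t'+h))]
    have e2 : meanM h φ t - meanM h φ t'
        = h⁻¹ • ((- ∫ u in t'..t, φ u) - ∫ u in (t + h)..(t' + h), φ u) := by
      rw [meanM_eq, meanM_eq, ← smul_sub, e1]
      congr 1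
      abel
    have b1 : ‖∫ u in t'..t, φ u‖ ≤ C * |t - t'| := by
      refine intervalIntegral.norm_integral_le_of_norm_le_const_ae ?_
      filter_upwards [hC] with u hu _
      exact hu
    have b2 : ‖∫ u in (t + h)..(t' + h), φ u‖ ≤ C * |t - t'| := by
      have := intervalIntegral.norm_integral_le_of_norm_le_const_ae
        (a := t + h) (b := t' + h) (C := C) (f := φ) ?_
      · calc ‖∫ u in (t + h)..(t' + h), φ u‖ ≤ C * |t' + h - (t + h)| := this
          _ = C * |t - t'| := by rw [show t' + h - (t + h) = -(t - t') by ring, abs_neg]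
      · filter_upwards [hC] with u hu _; exact hu
    rw [e2, norm_smul, norm_inv, Real.norm_eq_abs, abs_of_pos hh]
    have : ‖(- ∫ u in t'..t, φ u) - ∫ u in (t + h)..(t' + h), φ u‖ ≤ 2 * C * |t - t'| := by
      calc ‖(- ∫ u in t'..t, φ u) - ∫ u in (t + h)..(t' + h), φ u‖
          ≤ ‖(- ∫ u in t'..t, φ u)‖ + ‖∫ u in (t + h)..(t' + h), φ u‖ := norm_sub_le _ _
        _ ≤ C * |t - t'| + C * |t - t'| := by rw [norm_neg]; exact add_le_add b1 b2
        _ = 2 * C * |t - t'| := by ring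
    calc h⁻¹ * ‖(- ∫ u in t'..t, φ u) - ∫ u in (t + h)..(t' + h), φ u‖
        ≤ h⁻¹ * (2 * C * |t - t'|) := by
          exact mul_le_mul_of_nonneg_left this (le_of_lt (inv_pos.2 hh))
      _ = h⁻¹ * (2 * C) * |t - t'| := by ring
  rw [Metric.uniformContinuous_iff]
  intro ε hε
  refine ⟨ε / (h⁻¹ * (2 * C) + 1), by positivity, ?_⟩
  intro a b hab
  rw [dist_eq_norm]
  calc ‖meanM h φ a - meanM h φ b‖ ≤ h⁻¹ * (2 * C) * |a - b| := key a b
    _ ≤ h⁻¹ * (2 * C) * (ε / (h⁻¹ * (2 * C) + 1)) := by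
        refine mul_le_mul_of_nonneg_left ?_ (by positivity)
        rw [← Real.dist_eq]; exact le_of_lt hab
    _ < ε := by
        have hδ : 0 < ε / (h⁻¹ * (2 * C) + 1) := by positivity
        have hlt : h⁻¹ * (2 * C) * (ε / (h⁻¹ * (2 * C) + 1))
            < (h⁻¹ * (2 * C) + 1) * (ε / (h⁻¹ * (2 * C) + 1)) := by nlinarith
        have heq : (h⁻¹ * (2 * C) + 1) * (ε / (h⁻¹ * (2 * C) + 1)) = ε := by
          field_simp
        linarith

lemma meanM_bdduc (hm : AEStronglyMeasurable φ (volume : Measure ℝ))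
    (hC : ∀ᵐ u : ℝ, ‖φ u‖ ≤ C) (hC0 : 0 ≤ C) {h : ℝ} (hh : 0 < h) :
    BddUC (meanM h φ) :=
  ⟨⟨C, meanM_norm_le hm hC hh⟩, meanM_uc hm hC hC0 hh⟩

lemma smul_meanM_eq (hm : AEStronglyMeasurable φ (volume : Measure ℝ))
    (hC : ∀ᵐ u : ℝ, ‖φ u‖ ≤ C) {a b : ℝ} (hab : a < b) (t : ℝ) :
    (b - a) • meanM (b - a) φ (t - b) = ∫ u in (t - b)..(t - a), φ u := by
  rw [meanM_eq, smul_smul, mul_inv_cancel₀ (by linarith : b - a ≠ 0), one_smul]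
  congr 1
  ring

lemma block_eq (hm : AEStronglyMeasurable φ (volume : Measure ℝ))
    (hC : ∀ᵐ u : ℝ, ‖φ u‖ ≤ C) (B : X →L[ℂ] X) {a b : ℝ} (hab : a < b) (t : ℝ) :
    (∫ s in a..b, B (φ (t - s))) = B ((b - a) • meanM (b - a) φ (t - b)) := by
  have hii : IntervalIntegrable (fun s => φ (t - s)) volume a b := by
    have := (phi_intervalIntegrable hm hC (t - a) (t - b)).comp_sub_left t
    simpa using this
  rw [ContinuousLinearMap.intervalIntegral_comp_comm B hii, smul_meanM_eq hm hC hab t,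
    intervalIntegral.integral_comp_sub_left φ t]

lemma BddUC.add {u v : ℝ → X} (hu : BddUC u) (hv : BddUC v) : BddUC (u + v) := by
  obtain ⟨⟨Cu, hCu⟩, hu2⟩ := hu
  obtain ⟨⟨Cv, hCv⟩, hv2⟩ := hv
  exact ⟨⟨Cu + Cv, fun t => le_trans (norm_add_le _ _) (add_le_add (hCu t) (hCv t))⟩,
    hu2.add hv2⟩

lemma bddUC_zero : BddUC (0 : ℝ → X) :=
  ⟨⟨0, fun t => by simp⟩, uniformContinuous_const⟩

lemma BddUC.csmul {u : ℝ → X} (hu : BddUC u) (c : ℂ) : BddUC (c • u) := by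
  obtain ⟨⟨Cu, hCu⟩, hu2⟩ := hu
  refine ⟨⟨‖c‖ * Cu, fun t => ?_⟩, (uniformContinuous_const_smul c).comp hu2⟩
  simp only [Pi.smul_apply, norm_smul]
  exact mul_le_mul_of_nonneg_left (hCu t) (norm_nonneg c)

lemma BddUC.translate {u : ℝ → X} (hu : BddUC u) (a : ℝ) : BddUC (fun t => u (a + t)) := by
  obtain ⟨⟨Cu, hCu⟩, hu2⟩ := hu
  exact ⟨⟨Cu, fun t => hCu (a + t)⟩,
    hu2.comp (uniformContinuous_const.add uniformContinuous_id)⟩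

lemma BddUC.clm {u : ℝ → X} (hu : BddUC u) (B : X →L[ℂ] X) : BddUC (fun t => B (u t)) := by
  obtain ⟨⟨Cu, hCu⟩, hu2⟩ := hu
  refine ⟨⟨‖B‖ * Cu, fun t => ?_⟩, B.uniformContinuous.comp hu2⟩
  exact le_trans (B.le_opNorm _) (mul_le_mul_of_nonneg_left (hCu t) (norm_nonneg B))

lemma uc_of_tendstoUniformly {ψ : ℝ → X} {φn : ℕ → ℝ → X}
    (h : ∀ n, UniformContinuous (φn n)) (hT : TendstoUniformly φn ψ atTop) :
    UniformContinuous ψ := by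
  rw [Metric.uniformContinuous_iff]
  intro ε hε
  have h3 : 0 < ε / 3 := by linarith
  obtain ⟨N, hN⟩ := (Metric.tendstoUniformly_iff.1 hT (ε / 3) h3).exists
  obtain ⟨δ, hδ, hδ2⟩ := Metric.uniformContinuous_iff.1 (h N) (ε / 3) h3
  refine ⟨δ, hδ, fun {a b} hab => ?_⟩
  calc dist (ψ a) (ψ b) ≤ dist (ψ a) (φn N a) + dist (φn N a) (φn N b) + dist (φn N b) (ψ b) :=
        dist_triangle4 _ _ _ _
    _ < ε / 3 + ε / 3 + ε / 3 := by
        refine add_lt_add (add_lt_add (hN a) (hδ2 hab)) ?_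
        rw [dist_comm]; exact hN b
    _ = ε := by ring

end AuxLemmas

set_option maxHeartbeats 1000000 in
/-- Lemma 4.1: if `𝓕` is linear, closed under uniform limits of its bounded
uniformly continuous members, translation invariant and closed under bounded
operators, and `φ ∈ L∞` has all its means `M_h φ` in `𝓕`, then
`F * φ ∈ 𝓕 ∩ C_ub` for every `F ∈ L¹(ℝ, L(X))`. -/
theorem conv_mean_class_mem
    (𝓕 : Set (ℝ → X))
    (hlin : ∀ f ∈ 𝓕, ∀ g ∈ 𝓕, f + g ∈ 𝓕)
    (hsmul : ∀ f ∈ 𝓕, ∀ c : ℂ, c • f ∈ 𝓕)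
    (hzero : (0 : ℝ → X) ∈ 𝓕)
    (hclosed : ∀ (φn : ℕ → ℝ → X) (ψ : ℝ → X),
      (∀ n, φn n ∈ 𝓕 ∧ BddUC (φn n)) → TendstoUniformly φn ψ atTop → ψ ∈ 𝓕)
    (htrans : ∀ f ∈ 𝓕, ∀ a : ℝ, (fun t => f (a + t)) ∈ 𝓕)
    (hop : ∀ B : X →L[ℂ] X, ∀ f ∈ 𝓕, BddUC f → (fun t => B (f t)) ∈ 𝓕)
    (φ : ℝ → X) (hφ : EssBdd φ) (hmean : ∀ h : ℝ, 0 < h → meanM h φ ∈ 𝓕)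
    (F : ℝ → X →L[ℂ] X) (hF : Integrable F) :
    opConv F φ ∈ 𝓕 ∧ BddUC (opConv F φ) := by
  obtain ⟨hφm, C0, hC0⟩ := hφ
  set C : ℝ := max C0 0 with hCdef
  have hC : ∀ᵐ u : ℝ, ‖φ u‖ ≤ C := hC0.mono fun u hu => le_trans hu (le_max_left _ _)
  have hC0' : (0:ℝ) ≤ C := le_max_right _ _
  -- blocks
  have hblock : ∀ (B : X →L[ℂ] X) (a b : ℝ), a < b →
      ((fun t => B ((b - a) • meanM (b - a) φ (t - b))) ∈ 𝓕 ∧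
        BddUC (fun t => B ((b - a) • meanM (b - a) φ (t - b)))) := by
    intro B a b hab
    have hh : (0:ℝ) < b - a := by linarith
    have hg : meanM (b - a) φ ∈ 𝓕 := hmean _ hh
    have hgB : BddUC (meanM (b - a) φ) := meanM_bdduc hφm hC hC0' hh
    have h1 : (fun t => meanM (b - a) φ (-b + t)) ∈ 𝓕 := htrans _ hg (-b)
    have h1B : BddUC (fun t => meanM (b - a) φ (-b + t)) := hgB.translate (-b)
    have h2 : (((b - a : ℝ) : ℂ) • fun t => meanM (b - a) φ (-b + t)) ∈ 𝓕 :=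
      hsmul _ h1 _
    have h2B : BddUC (((b - a : ℝ) : ℂ) • fun t => meanM (b - a) φ (-b + t)) :=
      h1B.csmul _
    have h3 := hop B _ h2 h2B
    have h3B := h2B.clm B
    have heq : (fun t => B ((((b - a : ℝ) : ℂ) • fun s => meanM (b - a) φ (-b + s)) t))
        = fun t => B ((b - a) • meanM (b - a) φ (t - b)) := by
      funext t
      simp only [Pi.smul_apply, Complex.coe_smul, neg_add_eq_sub]
    rw [heq] at h3 h3B
    exact ⟨h3, h3B⟩
  -- key approximation
  have key : ∀ ε : ℝ, 0 < ε → ∃ Ψ : ℝ → X, Ψ ∈ 𝓕 ∧ BddUC Ψ ∧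
      ∀ t, ‖opConv F φ t - Ψ t‖ ≤ ε := by
    intro ε hε
    obtain ⟨G, hGsupp, hGL1, hGcont, hGint⟩ :=
      hF.exists_hasCompactSupport_integral_sub_le
        (show (0:ℝ) < ε / (2 * (C + 1)) by positivity)
    obtain ⟨r, hr⟩ := hGsupp.isBounded.subset_closedBall 0
    set d : ℝ := max r 1 with hddef
    set c : ℝ := -d - 1 with hcdef
    have hrd : r ≤ d := le_max_left r 1
    have h1d : (1:ℝ) ≤ d := le_max_right r 1
    have hcd : c < d := by rw [hcdef]; linarith
    have hGzero : ∀ s, s ∉ Set.Ioc c d → G s = 0 := by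
      intro s hs
      by_contra hGs
      have hmem : s ∈ Metric.closedBall (0:ℝ) r :=
        hr (subset_tsupport G (by simpa using hGs))
      rw [Real.closedBall_eq_Icc, zero_sub, zero_add] at hmem
      refine hs ⟨?_, ?_⟩
      · rw [hcdef]; linarith [hmem.1]
      · linarith [hmem.2]
    have hGuc : UniformContinuous G :=
      hGsupp.uniformContinuous_of_continuous hGcont
    have hdc : (0:ℝ) < d - c := by linarith
    set ε' : ℝ := ε / (2 * (d - c) * (C + 1)) with hε'def
    have hε' : 0 < ε' := by positivity
    obtain ⟨δ, hδ0, hδ⟩ := Metric.uniformContinuous_iff.1 hGuc ε' hε'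
    obtain ⟨m, hm⟩ := exists_nat_gt ((d - c) / δ)
    have hm0 : 0 < (m:ℝ) := lt_trans (by positivity) hm
    have hm0' : (m:ℝ) ≠ 0 := ne_of_gt hm0
    set η : ℝ := (d - c) / m with hηdef
    have hη0 : 0 < η := by positivity
    have hηδ : η < δ := by
      rw [hηdef, div_lt_iff₀ hm0]
      have := (div_lt_iff₀ hδ0).1 hm
      linarith
    set a_ : ℕ → ℝ := fun j => c + j * η with ha_def
    have hstep : ∀ j : ℕ, a_ (j + 1) - a_ j = η := by
      intro j; simp only [ha_def]; push_cast; ring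
    have hmono : ∀ j : ℕ, a_ j < a_ (j + 1) := by
      intro j; have := hstep j; linarith
    have ha0 : a_ 0 = c := by simp [ha_def]
    have ham : a_ m = d := by
      simp only [ha_def, hηdef]; field_simp; ring
    set Ψ : ℝ → X := ∑ j ∈ Finset.range m,
      (fun t => G (a_ (j + 1)) ((a_ (j + 1) - a_ j) • meanM (a_ (j + 1) - a_ j) φ (t - a_ (j + 1))))
      with hΨdef
    have hΨmem : Ψ ∈ 𝓕 ∧ BddUC Ψ := by
      refine Finset.sum_induction _ (fun f => f ∈ 𝓕 ∧ BddUC f)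
        (fun f g hf hg => ⟨hlin f hf.1 g hg.1, hf.2.add hg.2⟩) ⟨hzero, bddUC_zero⟩ ?_
      intro j _
      exact hblock (G (a_ (j + 1))) (a_ j) (a_ (j + 1)) (hmono j)
    refine ⟨Ψ, hΨmem.1, hΨmem.2, ?_⟩
    intro t
    -- interval integrability facts
    have hint1 : ∀ j : ℕ, IntervalIntegrable (fun s => G s (φ (t - s))) volume (a_ j) (a_ (j+1)) :=
      fun j => (integrand_integrable hφm hC hGint t).intervalIntegrable
    have hphiII : ∀ a b : ℝ, IntervalIntegrable (fun s => φ (t - s)) volume a b := by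
      intro a b
      have := (phi_intervalIntegrable hφm hC (t - a) (t - b)).comp_sub_left t
      simpa using this
    have hint2 : ∀ (B : X →L[ℂ] X) (a b : ℝ),
        IntervalIntegrable (fun s => B (φ (t - s))) volume a b := by
      intro B a b
      exact ⟨B.integrable_comp (hphiII a b).1, B.integrable_comp (hphiII a b).2⟩
    -- splitting
    have hsplit : opConv G φ t
        = ∑ j ∈ Finset.range m, ∫ s in a_ j..a_ (j+1), G s (φ (t - s)) := by
      have e1 : opConv G φ t = ∫ s in Set.Ioc c d, G s (φ (t - s)) := by
        rw [opConv]
        refine (setIntegral_eq_integral_of_forall_compl_eq_zero ?_).symm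
        intro s hs
        rw [hGzero s hs]
        simp
      have e2 : (∫ s in Set.Ioc c d, G s (φ (t - s)))
          = ∫ s in c..d, G s (φ (t - s)) := by
        rw [intervalIntegral.integral_of_le hcd.le]
      have e3 := intervalIntegral.sum_integral_adjacent_intervals
        (a := a_) (μ := volume) (f := fun s => G s (φ (t - s))) (n := m)
        (fun k _ => hint1 k)
      rw [ha0, ham] at e3
      rw [e1, e2, ← e3]
    have hΨt : Ψ t = ∑ j ∈ Finset.range m, ∫ s in a_ j..a_ (j+1), G (a_ (j+1)) (φ (t - s)) := by
      rw [hΨdef, Finset.sum_apply]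
      refine Finset.sum_congr rfl fun j _ => ?_
      exact (block_eq hφm hC (G (a_ (j+1))) (hmono j) t).symm
    -- per-interval bound
    have hbound : ∀ j : ℕ,
        ‖(∫ s in a_ j..a_ (j+1), G s (φ (t - s)))
          - ∫ s in a_ j..a_ (j+1), G (a_ (j+1)) (φ (t - s))‖ ≤ ε' * C * η := by
      intro j
      rw [← intervalIntegral.integral_sub (hint1 j) (hint2 (G (a_ (j+1))) _ _)]
      have : ‖∫ s in a_ j..a_ (j+1), (G s (φ (t - s)) - G (a_ (j+1)) (φ (t - s)))‖
          ≤ ε' * C * |a_ (j+1) - a_ j| := by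
        refine intervalIntegral.norm_integral_le_of_norm_le_const_ae ?_
        filter_upwards [phi_ae_bound hC t] with s hs hmem
        rw [Set.uIoc_of_le (hmono j).le] at hmem
        have hdist : dist s (a_ (j+1)) < δ := by
          rw [Real.dist_eq, abs_lt]
          constructor
          · have := hstep j; have := hmem.1; linarith
          · have := hmem.2; linarith
        have hGd : ‖G s - G (a_ (j+1))‖ ≤ ε' := by
          rw [← dist_eq_norm]
          exact (hδ hdist).le
        calc ‖G s (φ (t - s)) - G (a_ (j+1)) (φ (t - s))‖
            = ‖(G s - G (a_ (j+1))) (φ (t - s))‖ := by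
              rw [ContinuousLinearMap.sub_apply]
          _ ≤ ‖G s - G (a_ (j+1))‖ * ‖φ (t - s)‖ := (G s - G (a_ (j+1))).le_opNorm _
          _ ≤ ε' * C := mul_le_mul hGd hs (norm_nonneg _) hε'.le
      calc ‖∫ s in a_ j..a_ (j+1), (G s (φ (t - s)) - G (a_ (j+1)) (φ (t - s)))‖
          ≤ ε' * C * |a_ (j+1) - a_ j| := this
        _ = ε' * C * η := by rw [hstep j, abs_of_pos hη0]
    -- total bound vs opConv G
    have hGtot : ‖opConv G φ t - Ψ t‖ ≤ ε / 2 := by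
      rw [hsplit, hΨt, ← Finset.sum_sub_distrib]
      calc ‖∑ j ∈ Finset.range m, ((∫ s in a_ j..a_ (j+1), G s (φ (t - s)))
              - ∫ s in a_ j..a_ (j+1), G (a_ (j+1)) (φ (t - s)))‖
          ≤ ∑ j ∈ Finset.range m, ‖(∫ s in a_ j..a_ (j+1), G s (φ (t - s)))
              - ∫ s in a_ j..a_ (j+1), G (a_ (j+1)) (φ (t - s))‖ := norm_sum_le _ _
        _ ≤ ∑ j ∈ Finset.range m, ε' * C * η := Finset.sum_le_sum fun j _ => hbound j
        _ = m * (ε' * C * η) := by rw [Finset.sum_const, Finset.card_range, nsmul_eq_mul]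
        _ = ε' * C * (d - c) := by
            rw [hηdef]; field_simp
            try ring
        _ ≤ ε / 2 := by
            rw [hε'def]
            rw [show ε / (2 * (d - c) * (C + 1)) * C * (d - c)
                = (C / (C + 1)) * (ε / 2) * ((d - c) / (d - c)) by field_simp]
            rw [div_self (ne_of_gt hdc), mul_one]
            have h1 : C / (C + 1) ≤ 1 := by
              rw [div_le_one (by linarith)]; linarith
            nlinarith [div_nonneg hC0' (by linarith : (0:ℝ) ≤ C + 1)]
    -- vs opConv F
    have hFtot : ‖opConv F φ t - opConv G φ t‖ ≤ ε / 2 := by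
      have h1 := opConv_sub_norm_le hφm hC hF hGint t
      have h2 : (∫ s, ‖F s - G s‖) * C ≤ ε / (2 * (C + 1)) * C := by
        refine mul_le_mul_of_nonneg_right ?_ hC0'
        exact hGL1
      have h3 : ε / (2 * (C + 1)) * C ≤ ε / 2 := by
        rw [show ε / (2 * (C + 1)) * C = (C / (C + 1)) * (ε / 2) by field_simp]
        have h1' : C / (C + 1) ≤ 1 := by
          rw [div_le_one (by linarith)]; linarith
        nlinarith [div_nonneg hC0' (by linarith : (0:ℝ) ≤ C + 1)]
      calc ‖opConv F φ t - opConv G φ t‖ ≤ (∫ s, ‖F s - G s‖) * C := h1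
        _ ≤ ε / 2 := le_trans h2 h3
    calc ‖opConv F φ t - Ψ t‖
        ≤ ‖opConv F φ t - opConv G φ t‖ + ‖opConv G φ t - Ψ t‖ := by
          have : opConv F φ t - Ψ t
              = (opConv F φ t - opConv G φ t) + (opConv G φ t - Ψ t) := by abel
          rw [this]; exact norm_add_le _ _
      _ ≤ ε / 2 + ε / 2 := add_le_add hFtot hGtot
      _ = ε := by ring
  -- choose approximating sequence
  choose Ψ hΨ𝓕 hΨB hΨclose using fun n : ℕ =>
    key (1 / (n + 1)) (by positivity)
  have hTU : TendstoUniformly Ψ (opConv F φ) atTop := by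
    rw [Metric.tendstoUniformly_iff]
    intro ε hε
    have := (tendsto_one_div_add_atTop_nhds_zero_nat).eventually (gt_mem_nhds hε)
    filter_upwards [this] with n hn t
    rw [dist_eq_norm]
    exact lt_of_le_of_lt (hΨclose n t) hn
  have hmem : opConv F φ ∈ 𝓕 := hclosed Ψ (opConv F φ) (fun n => ⟨hΨ𝓕 n, hΨB n⟩) hTU
  refine ⟨hmem, ⟨(∫ s, ‖F s‖) * C, fun t => opConv_norm_le hφm hC hF t⟩, ?_⟩
  exact uc_of_tendstoUniformly (fun n => (hΨB n).2) hTU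


end
end
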